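/- arXiv:2312.13701 — 3 statements merged into one kernel-verified Lean document; each statement's English description precedes it below -/
import Mathlib

section
/- Let C be a binary projective three-weight linear code of length n, dimension k and minimum distance d, and suppose A_n(C) > 0. Then the three nonzero Hamming weights of C are w1 = d, w2 = n − d and w3 = n, and d satisfies the relation (2^{k−1} − 1)·4·d·(n − d) = 2^{k−1}·n·(n − 1) (equivalently, d = (n − √(n·(2^{k−1} − n)/(2^{k−1} − 1)))/2 and n − d = (n + √(n·(2^{k−1} − n)/(2^{k−1} − 1)))/2). -/
/-- Hamming weight of a binary vector: the number of nonzero coordinates. -/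
noncomputable def wt {ι : Type*} (c : ι → ZMod 2) : ℕ := Nat.card {i : ι // c i ≠ 0}

/-- Number of codewords of Hamming weight `w` in a set of binary vectors. -/
noncomputable def weightCount {ι : Type*} (C : Set (ι → ZMod 2)) (w : ℕ) : ℕ :=
  Nat.card {c : ι → ZMod 2 // c ∈ C ∧ wt c = w}

/-- The dual code: all vectors orthogonal (standard inner product) to every codeword. -/
def dualCode {ι : Type*} (C : Set (ι → ZMod 2)) : Set (ι → ZMod 2) :=
  {x | ∀ c ∈ C, ∑ᶠ i, x i * c i = 0}

/-- A code is projective if the minimum distance of its dual is at least 3. -/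
def IsProjective {ι : Type*} (C : Set (ι → ZMod 2)) : Prop :=
  ∀ x ∈ dualCode C, x ≠ 0 → 3 ≤ wt x

/-- `d` is the minimum distance of `C`: the least Hamming weight of a nonzero codeword. -/
def IsMinDist {ι : Type*} (C : Set (ι → ZMod 2)) (d : ℕ) : Prop :=
  (∃ c ∈ C, c ≠ 0 ∧ wt c = d) ∧ ∀ c ∈ C, c ≠ 0 → d ≤ wt c

/-- The number of nonzero Hamming weights occurring among codewords of `C`. -/
noncomputable def numNonzeroWeights {ι : Type*} (C : Set (ι → ZMod 2)) : ℕ :=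
  Nat.card {i : ℕ | 1 ≤ i ∧ weightCount C i ≠ 0}

/-- The codewords of weight `w` in `C` hold a 2-design with index `lam`: every pair of
distinct coordinate positions lies in the support of exactly `lam` codewords of weight `w`. -/
def HoldsTwoDesign {ι : Type*} (C : Set (ι → ZMod 2)) (w lam : ℕ) : Prop :=
  ∀ p q : ι, p ≠ q →
    Nat.card {c : ι → ZMod 2 // c ∈ C ∧ wt c = w ∧ c p ≠ 0 ∧ c q ≠ 0} = lam

open Finset

lemma zmod2_cases : ∀ x : ZMod 2, x = 0 ∨ x = 1 := by decide
lemma zmod2_ne : ∀ x : ZMod 2, x ≠ 0 ↔ x = 1 := by decide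
lemma zmod2_add_self : ∀ x : ZMod 2, x + x = 0 := by decide

lemma wt_eq_card {n : ℕ} (c : Fin n → ZMod 2) :
    wt c = #(univ.filter fun i => c i ≠ 0) := by
  rw [wt, Nat.card_eq_fintype_card, Fintype.card_subtype]

lemma wt_le {n : ℕ} (c : Fin n → ZMod 2) : wt c ≤ n := by
  rw [wt_eq_card]
  simpa using Finset.card_filter_le univ (fun i => c i ≠ 0)

lemma wt_eq_zero {n : ℕ} (c : Fin n → ZMod 2) :
    wt c = 0 ↔ c = 0 := by
  rw [wt_eq_card, Finset.card_eq_zero, Finset.filter_eq_empty_iff]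
  constructor
  · intro h; funext i; simpa using h (mem_univ i)
  · intro h i _; simp [h]

lemma wt_eq_n {n : ℕ} (c : Fin n → ZMod 2) :
    wt c = n ↔ c = fun _ => 1 := by
  rw [wt_eq_card]
  constructor
  · intro h
    have huniv : univ.filter (fun i => c i ≠ 0) = univ :=
      Finset.eq_univ_of_card _ (by simpa using h)
    funext i
    have : i ∈ univ.filter (fun i => c i ≠ 0) := by rw [huniv]; exact mem_univ i
    exact (zmod2_ne _).1 (by simpa using this)
  · intro h
    subst h
    simp [Finset.filter_true_of_mem]

lemma wt_add_one {n : ℕ} (c : Fin n → ZMod 2) :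
    wt (fun i => c i + 1) = n - wt c := by
  classical
  rw [wt_eq_card (fun i => c i + 1), wt_eq_card]
  have h : (univ.filter fun i => c i + 1 ≠ 0) = univ \ (univ.filter fun i => c i ≠ 0) := by
    ext i
    simp only [mem_filter, mem_sdiff, mem_univ, true_and, ne_eq, not_not]
    rcases zmod2_cases (c i) with h | h <;> simp [h] <;> decide
  rw [h, Finset.card_sdiff_of_subset (Finset.filter_subset _ _)]
  simp

lemma nat_card_subtype_filter {α : Type*} [Fintype α] (p : α → Prop) [DecidablePred p] :
    Nat.card {x : α // p x} = #(univ.filter p) := by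
  rw [Nat.card_eq_fintype_card, Fintype.card_subtype]

section Count

variable {n : ℕ} {C : Submodule (ZMod 2) (Fin n → ZMod 2)} [Fintype ↥C]

lemma add_add_self (c v : ↥C) : c + v + v = c := by
  apply Subtype.ext
  funext i
  have : ((c + v + v : ↥C) : Fin n → ZMod 2) i = c.1 i + v.1 i + v.1 i := by
    simp
  rw [this, add_assoc, zmod2_add_self, add_zero]

lemma card_filter_translate (v : ↥C) (p : ↥C → Prop) [DecidablePred p] :
    #(univ.filter p) = #(univ.filter fun c => p (c + v)) := by
  refine Finset.card_nbij' (fun c => c + v) (fun c => c + v) ?_ ?_ ?_ ?_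
  · intro a ha
    simp only [Finset.mem_coe, mem_filter, mem_univ, true_and] at ha ⊢
    rwa [add_add_self]
  · intro a ha
    simp only [Finset.mem_coe, mem_filter, mem_univ, true_and] at ha ⊢
    exact ha
  · intro a _; exact add_add_self a v
  · intro a _; exact add_add_self a v

lemma coe_add_apply (c v : ↥C) (i : Fin n) :
    ((c + v : ↥C) : Fin n → ZMod 2) i = c.1 i + v.1 i := by simp

lemma count_coord (i : Fin n) (v : ↥C) (hv : v.1 i = 1) :
    2 * #(univ.filter fun c : ↥C => c.1 i ≠ 0) = Fintype.card ↥C := by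
  classical
  have hsplit := Finset.card_filter_add_card_filter_not
    (s := (univ : Finset ↥C)) (p := fun c : ↥C => c.1 i ≠ 0)
  have htrans := card_filter_translate v (fun c : ↥C => c.1 i ≠ 0)
  have hcongr : (univ.filter fun c : ↥C => ((c + v : ↥C) : Fin n → ZMod 2) i ≠ 0)
      = univ.filter (fun c : ↥C => ¬ c.1 i ≠ 0) := by
    apply filter_congr
    intro c _
    rw [coe_add_apply, hv]
    rcases zmod2_cases (c.1 i) with h | h <;> rw [h] <;> simp <;> decide
  rw [hcongr] at htrans
  simp only [Finset.card_univ] at hsplit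
  omega

lemma count_pair (i j : Fin n) (w : ↥C) (hwi : w.1 i = 0) (hwj : w.1 j = 1) :
    2 * #(univ.filter fun c : ↥C => c.1 i ≠ 0 ∧ c.1 j ≠ 0)
      = #(univ.filter fun c : ↥C => c.1 i ≠ 0) := by
  classical
  have hsplit := Finset.card_filter_add_card_filter_not
    (s := univ.filter fun c : ↥C => c.1 i ≠ 0) (p := fun c : ↥C => c.1 j ≠ 0)
  rw [Finset.filter_filter, Finset.filter_filter] at hsplit
  have htrans := card_filter_translate w (fun c : ↥C => c.1 i ≠ 0 ∧ c.1 j ≠ 0)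
  have hcongr : (univ.filter fun c : ↥C =>
        ((c + w : ↥C) : Fin n → ZMod 2) i ≠ 0 ∧ ((c + w : ↥C) : Fin n → ZMod 2) j ≠ 0)
      = univ.filter (fun c : ↥C => c.1 i ≠ 0 ∧ ¬ c.1 j ≠ 0) := by
    apply filter_congr
    intro c _
    rw [coe_add_apply, coe_add_apply, hwi, hwj, add_zero]
    constructor
    · rintro ⟨h1, h2⟩
      refine ⟨h1, ?_⟩
      rcases zmod2_cases (c.1 j) with h | h
      · simp [h]
      · exact absurd (by rw [h]; decide) h2
    · rintro ⟨h1, h2⟩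
      refine ⟨h1, ?_⟩
      simp only [not_not] at h2
      rw [h2]
      decide
  simp only [hcongr] at htrans
  omega

end Count

lemma wt_single {n : ℕ} (i : Fin n) : wt ((Pi.single i 1 : Fin n → ZMod 2)) = 1 := by
  classical
  rw [wt_eq_card]
  have : (univ.filter fun m => (Pi.single i 1 : Fin n → ZMod 2) m ≠ 0) = {i} := by
    ext m
    rcases eq_or_ne m i with rfl | h
    · simp
    · simp [Pi.single_apply, h]
  rw [this, Finset.card_singleton]

lemma eval_single {n : ℕ} (i : Fin n) (c : Fin n → ZMod 2) :
    ∑ᶠ m, (Pi.single i 1 : Fin n → ZMod 2) m * c m = c i := by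
  rw [finsum_eq_sum_of_fintype]
  have : ∀ m, (Pi.single i 1 : Fin n → ZMod 2) m * c m = if m = i then c m else 0 := by
    intro m
    rcases eq_or_ne m i with rfl | h
    · simp
    · simp [Pi.single_apply, h]
  simp only [this]
  simp

lemma proj_coord {n : ℕ} (C : Submodule (ZMod 2) (Fin n → ZMod 2))
    (hproj : IsProjective (C : Set (Fin n → ZMod 2))) (i : Fin n) :
    ∃ c ∈ C, c i ≠ 0 := by
  by_contra h
  push_neg at h
  have hmem : (Pi.single i 1 : Fin n → ZMod 2) ∈ dualCode (C : Set (Fin n → ZMod 2)) := by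
    intro c hc
    rw [eval_single]
    simpa using h c hc
  have hne : (Pi.single i 1 : Fin n → ZMod 2) ≠ 0 := by
    intro h0
    have := congrFun h0 i
    simp at this
  have := hproj _ hmem hne
  rw [wt_single] at this
  omega

lemma wt_single_pair {n : ℕ} (i j : Fin n) (hij : i ≠ j) :
    wt ((Pi.single i 1 : Fin n → ZMod 2) + (Pi.single j 1 : Fin n → ZMod 2)) = 2 := by
  classical
  rw [wt_eq_card]
  have : (univ.filter fun m => ((Pi.single i 1 : Fin n → ZMod 2) + (Pi.single j 1 : Fin n → ZMod 2)) m ≠ 0)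
      = {i, j} := by
    ext m
    simp only [mem_filter, mem_univ, true_and, Pi.add_apply, mem_insert, mem_singleton]
    rcases eq_or_ne m i with h1 | h1 <;> rcases eq_or_ne m j with h2 | h2
    · exact absurd (h1 ▸ h2) hij
    · subst h1; simp [Pi.single_apply, hij.symm, h2]
    · subst h2; simp [Pi.single_apply, hij, h1]
    · simp [Pi.single_apply, h1, h2]
  rw [this, Finset.card_insert_of_notMem (by simpa using hij), Finset.card_singleton]

lemma proj_pair {n : ℕ} (C : Submodule (ZMod 2) (Fin n → ZMod 2))
    (hproj : IsProjective (C : Set (Fin n → ZMod 2))) (i j : Fin n) (hij : i ≠ j) :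
    ∃ c ∈ C, c i + c j ≠ 0 := by
  by_contra h
  push_neg at h
  set x := (Pi.single i 1 : Fin n → ZMod 2) + (Pi.single j 1 : Fin n → ZMod 2) with hx
  have hmem : x ∈ dualCode (C : Set (Fin n → ZMod 2)) := by
    intro c hc
    have : ∑ᶠ m, x m * c m = c i + c j := by
      rw [hx]
      rw [finsum_eq_sum_of_fintype]
      have heq : ∀ m, ((Pi.single i 1 : Fin n → ZMod 2) + (Pi.single j 1 : Fin n → ZMod 2)) m * c m
          = (Pi.single i 1 : Fin n → ZMod 2) m * c m + (Pi.single j 1 : Fin n → ZMod 2) m * c m := by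
        intro m; simp [add_mul]
      simp only [heq]
      rw [Finset.sum_add_distrib]
      rw [← finsum_eq_sum_of_fintype, ← finsum_eq_sum_of_fintype, eval_single, eval_single]
    rw [this]
    exact h c hc
  have hne : x ≠ 0 := by
    intro h0
    have := congrFun h0 i
    simp [hx, Pi.single_apply, hij] at this
  have := hproj _ hmem hne
  rw [wt_single_pair i j hij] at this
  omega

theorem three_weights_of_projective_with_full_weight (n k d : ℕ) (C : Submodule (ZMod 2) (Fin n → ZMod 2))
    (hk : Module.finrank (ZMod 2) C = k)
    (hd : IsMinDist (C : Set (Fin n → ZMod 2)) d)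
    (hproj : IsProjective (C : Set (Fin n → ZMod 2)))
    (h3 : numNonzeroWeights (C : Set (Fin n → ZMod 2)) = 3)
    (hAn : 0 < weightCount (C : Set (Fin n → ZMod 2)) n) :
    {i : ℕ | 1 ≤ i ∧ weightCount (C : Set (Fin n → ZMod 2)) i ≠ 0} = {d, n - d, n} ∧
      (2 ^ (k - 1) - 1) * 4 * d * (n - d) = 2 ^ (k - 1) * n * (n - 1) := by
  classical
  haveI : Fintype ↥C := Fintype.ofFinite _
  set S : Set ℕ := {i : ℕ | 1 ≤ i ∧ weightCount (C : Set (Fin n → ZMod 2)) i ≠ 0} with hS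
  have hcard : Fintype.card ↥C = 2 ^ k := by
    have := Module.card_eq_pow_finrank (K := ZMod 2) (V := ↥C)
    rwa [ZMod.card, hk] at this
  -- weightCount characterization
  have hwc : ∀ w, weightCount (C : Set (Fin n → ZMod 2)) w ≠ 0 ↔ ∃ c ∈ C, wt c = w := by
    intro w
    rw [weightCount, Nat.card_ne_zero]
    constructor
    · rintro ⟨⟨⟨c, hc, hwt⟩⟩, -⟩; exact ⟨c, hc, hwt⟩
    · rintro ⟨c, hc, hwt⟩; exact ⟨⟨⟨c, hc, hwt⟩⟩, inferInstance⟩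
  -- all-ones codeword
  obtain ⟨c1, hc1C, hc1wt⟩ := (hwc n).1 (Nat.pos_iff_ne_zero.mp hAn)
  have hc1 : c1 = fun _ => 1 := (wt_eq_n c1).1 hc1wt
  -- minimum distance facts
  obtain ⟨cd, hcdC, hcd0, hcdwt⟩ := hd.1
  have hmin := hd.2
  have hd1 : 1 ≤ d := by
    rcases Nat.eq_zero_or_pos d with h | h
    · exact absurd ((wt_eq_zero cd).1 (by rw [hcdwt, h])) hcd0
    · exact h
  have hdn : d ≤ n := hcdwt ▸ wt_le cd
  have hn1 : 1 ≤ n := le_trans hd1 hdn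
  have hdS : d ∈ S := ⟨hd1, (hwc d).2 ⟨cd, hcdC, hcdwt⟩⟩
  have hnS : n ∈ S := ⟨hn1, (hwc n).2 ⟨c1, hc1C, hc1wt⟩⟩
  -- closure under complement
  have hclose : ∀ w ∈ S, w ≠ n → d ≤ w ∧ d ≤ n - w ∧ (n - w) ∈ S := by
    intro w hw hwn
    obtain ⟨c, hc, hwt⟩ := (hwc w).1 hw.2
    have hw1 : 1 ≤ w := hw.1
    have hwle : w ≤ n := hwt ▸ wt_le c
    have hc0 : c ≠ 0 := by
      intro h0
      rw [← hwt, (wt_eq_zero c).2 h0] at hw1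
      omega
    have hcw : d ≤ w := hwt ▸ hmin c hc hc0
    have hc'C : (fun i => c i + 1) ∈ C := by
      have h1 : (fun _ => (1 : ZMod 2)) ∈ C := hc1 ▸ hc1C
      have := C.add_mem hc h1
      exact this
    have hwtc' : wt (fun i => c i + 1) = n - w := by rw [wt_add_one c, hwt]
    have hc'0 : (fun i => c i + 1) ≠ (0 : Fin n → ZMod 2) := by
      intro h0
      have := (wt_eq_zero _).2 h0
      rw [hwtc'] at this
      omega
    have hd_nw : d ≤ n - w := hwtc' ▸ hmin _ hc'C hc'0
    exact ⟨hcw, hd_nw, ⟨by omega, (hwc (n - w)).2 ⟨_, hc'C, hwtc'⟩⟩⟩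
  -- S has exactly 3 elements
  have hScard : S.ncard = 3 := by
    have := h3
    rwa [numNonzeroWeights, Nat.card_coe_set_eq] at this
  have hSfin : S.Finite := by
    apply (Set.finite_Icc 1 n).subset
    intro w hw
    obtain ⟨c, hc, hwt⟩ := (hwc w).1 hw.2
    exact Set.mem_Icc.2 ⟨hw.1, hwt ▸ wt_le c⟩
  -- d < n - d
  have hdlt : d < n - d := by
    by_contra hcon
    push_neg at hcon
    have hsub2 : S ⊆ {d, n} := by
      intro w hw
      rcases eq_or_ne w n with h | h
      · exact Or.inr h
      · obtain ⟨h1, h2, -⟩ := hclose w hw h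
        obtain ⟨c, hc, hwt⟩ := (hwc w).1 hw.2
        have hwle : w ≤ n := hwt ▸ wt_le c
        left
        omega
    have : S.ncard ≤ 2 := by
      calc S.ncard ≤ ({d, n} : Set ℕ).ncard :=
            Set.ncard_le_ncard hsub2 (Set.toFinite _)
        _ ≤ 2 := by
            apply le_trans (Set.ncard_insert_le _ _)
            simp
    omega
  have hdnn : d ≠ n := by omega
  have hndS : (n - d) ∈ S := (hclose d hdS hdnn).2.2
  -- the set of weights
  have hSeq : S = {d, n - d, n} := by
    have hsub2 : ({d, n - d, n} : Set ℕ) ⊆ S := by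
      intro w hw
      rcases hw with h | h | h
      · exact h ▸ hdS
      · exact h ▸ hndS
      · exact h ▸ hnS
    refine (Set.eq_of_subset_of_ncard_le hsub2 ?_ hSfin).symm
    have h1 : ({d, n - d, n} : Set ℕ).ncard = 3 := by
      rw [Set.ncard_insert_of_notMem (by simp; omega) (Set.toFinite _),
        Set.ncard_insert_of_notMem (by simp; omega) (Set.toFinite _),
        Set.ncard_singleton]
    omega
  refine ⟨hSeq, ?_⟩
  -- k ≥ 2
  have hwt_ne : ∀ a b : Fin n → ZMod 2, wt a ≠ wt b → a ≠ b := by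
    intro a b h hab
    exact h (hab ▸ rfl)
  have hk2 : 2 ≤ k := by
    by_contra hcon
    push_neg at hcon
    have h2k : 2 ^ k ≤ 2 := by
      calc 2 ^ k ≤ 2 ^ 1 := Nat.pow_le_pow_right (by norm_num) (by omega)
        _ = 2 := rfl
    have hcd' : (fun i => cd i + 1) ∈ C := by
      have h1 : (fun _ => (1 : ZMod 2)) ∈ C := hc1 ▸ hc1C
      exact C.add_mem hcdC h1
    have hwtcd' : wt (fun i => cd i + 1) = n - d := by rw [wt_add_one cd, hcdwt]
    set x1 : ↥C := ⟨cd, hcdC⟩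
    set x2 : ↥C := ⟨c1, hc1C⟩
    set x3 : ↥C := ⟨fun i => cd i + 1, hcd'⟩
    have hne12 : x1 ≠ x2 := by
      intro h
      have := hwt_ne cd c1 (by rw [hcdwt, hc1wt]; omega)
      exact this (Subtype.ext_iff.1 h)
    have hne13 : x1 ≠ x3 := by
      intro h
      have := hwt_ne cd (fun i => cd i + 1) (by rw [hcdwt, hwtcd']; omega)
      exact this (Subtype.ext_iff.1 h)
    have hne23 : x2 ≠ x3 := by
      intro h
      have := hwt_ne c1 (fun i => cd i + 1) (by rw [hc1wt, hwtcd']; omega)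
      exact this (Subtype.ext_iff.1 h)
    have hcard3 : ({x1, x2, x3} : Finset ↥C).card = 3 := by
      rw [Finset.card_insert_of_notMem (by simp [hne12, hne13]),
        Finset.card_insert_of_notMem (by simp [hne23]), Finset.card_singleton]
    have := Finset.card_le_card (Finset.subset_univ ({x1, x2, x3} : Finset ↥C))
    rw [hcard3, Finset.card_univ, hcard] at this
    omega
  have hpow1 : 2 ^ k = 2 * 2 ^ (k - 1) := by
    rw [← pow_succ']
    congr 1
    omega
  have hpow2 : 2 ^ (k - 1) = 2 * 2 ^ (k - 2) := by
    rw [← pow_succ']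
    congr 1
    omega
  -- coordinate counts
  have hcoord : ∀ i : Fin n, #(univ.filter fun c : ↥C => c.1 i ≠ 0) = 2 ^ (k - 1) := by
    intro i
    obtain ⟨v, hvC, hvi⟩ := proj_coord C hproj i
    have := count_coord i ⟨v, hvC⟩ ((zmod2_ne _).1 hvi)
    rw [hcard] at this
    omega
  have hpair : ∀ i j : Fin n, i ≠ j →
      #(univ.filter fun c : ↥C => c.1 i ≠ 0 ∧ c.1 j ≠ 0) = 2 ^ (k - 2) := by
    intro i j hij
    obtain ⟨r, hrC, hrij⟩ := proj_pair C hproj i j hij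
    rcases zmod2_cases (r i) with hri | hri <;> rcases zmod2_cases (r j) with hrj | hrj
    · rw [hri, hrj] at hrij; simp at hrij
    · -- pattern (0,1) : direct
      have := count_pair i j ⟨r, hrC⟩ hri hrj
      rw [hcoord i] at this
      omega
    · -- pattern (1,0) : swap
      have h2 := count_pair j i ⟨r, hrC⟩ hrj hri
      rw [hcoord j] at h2
      have hcongr : (univ.filter fun c : ↥C => c.1 j ≠ 0 ∧ c.1 i ≠ 0)
          = univ.filter fun c : ↥C => c.1 i ≠ 0 ∧ c.1 j ≠ 0 := by
        apply filter_congr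
        intro c _
        exact and_comm
      rw [hcongr] at h2
      omega
    · rw [hri, hrj] at hrij; exact absurd (by decide) hrij
  -- weight distribution
  set A : ℕ → ℕ := fun w => #(univ.filter fun c : ↥C => wt c.1 = w) with hA
  have hwt_mem : ∀ c : ↥C, wt c.1 = 0 ∨ wt c.1 = d ∨ wt c.1 = n - d ∨ wt c.1 = n := by
    intro c
    rcases eq_or_ne c.1 0 with h | h
    · left; exact (wt_eq_zero _).2 h
    · right
      have h1 : 1 ≤ wt c.1 := by
        rcases Nat.eq_zero_or_pos (wt c.1) with h0 | h0
        · exact absurd ((wt_eq_zero _).1 h0) h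
        · exact h0
      have : wt c.1 ∈ S := ⟨h1, (hwc _).2 ⟨c.1, c.2, rfl⟩⟩
      rw [hSeq] at this
      rcases this with h' | h' | h'
      · exact Or.inl h'
      · exact Or.inr (Or.inl h')
      · exact Or.inr (Or.inr h')
  have hA0 : A 0 = 1 := by
    show #(univ.filter fun c : ↥C => wt c.1 = 0) = 1
    have : (univ.filter fun c : ↥C => wt c.1 = 0) = {(0 : ↥C)} := by
      ext c
      simp only [mem_filter, mem_univ, true_and, Finset.mem_singleton]
      rw [wt_eq_zero]
      exact ⟨fun h => Subtype.ext h, fun h => by rw [h]; rfl⟩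
    rw [this, Finset.card_singleton]
  have hAn1 : A n = 1 := by
    show #(univ.filter fun c : ↥C => wt c.1 = n) = 1
    have : (univ.filter fun c : ↥C => wt c.1 = n) = {(⟨c1, hc1C⟩ : ↥C)} := by
      ext c
      simp only [mem_filter, mem_univ, true_and, Finset.mem_singleton]
      rw [wt_eq_n]
      constructor
      · intro h; exact Subtype.ext (h.trans hc1.symm)
      · intro h; rw [h]; exact hc1
    rw [this, Finset.card_singleton]
  -- fiberwise sums
  have hT : (0 : ℕ) ∉ ({d, n - d, n} : Finset ℕ) := by simp; omega
  have hT2 : d ∉ ({n - d, n} : Finset ℕ) := by simp; omega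
  have hT3 : (n - d) ∉ ({n} : Finset ℕ) := by simp; omega
  have hsum : ∀ F : ℕ → ℕ, ∑ c : ↥C, F (wt c.1)
      = A 0 * F 0 + (A d * F d + (A (n - d) * F (n - d) + A n * F n)) := by
    intro F
    have hmaps : ∀ c : ↥C, c ∈ (univ : Finset ↥C) →
        wt c.1 ∈ ({0, d, n - d, n} : Finset ℕ) := by
      intro c _
      simp only [Finset.mem_insert, Finset.mem_singleton]
      exact hwt_mem c
    rw [← Finset.sum_fiberwise_of_maps_to' hmaps F]
    rw [Finset.sum_insert hT, Finset.sum_insert hT2, Finset.sum_insert hT3,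
      Finset.sum_singleton]
    simp only [Finset.sum_const, smul_eq_mul]
    rfl
  -- moment 0
  have e0 : A d + A (n - d) + 2 = 2 ^ k := by
    have h := hsum (fun _ => 1)
    rw [Finset.sum_const, Finset.card_univ, hcard, smul_eq_mul, mul_one] at h
    rw [hA0, hAn1] at h
    omega
  -- moment 1
  have hM1 : ∑ c : ↥C, wt c.1 = n * 2 ^ (k - 1) := by
    have h1 : ∑ c : ↥C, wt c.1
        = ∑ c : ↥C, ∑ i : Fin n, if c.1 i ≠ 0 then 1 else 0 := by
      refine Finset.sum_congr rfl fun c _ => ?_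
      rw [wt_eq_card, Finset.card_filter]
    rw [h1, Finset.sum_comm]
    have h2 : ∀ i : Fin n, (∑ c : ↥C, if c.1 i ≠ 0 then 1 else 0) = 2 ^ (k - 1) := by
      intro i
      rw [← Finset.card_filter, hcoord i]
    rw [Finset.sum_congr rfl fun i _ => h2 i, Finset.sum_const, Finset.card_univ,
      Fintype.card_fin, smul_eq_mul]
  have e1 : A d * d + A (n - d) * (n - d) + n = n * 2 ^ (k - 1) := by
    have h := hsum id
    simp only [id] at h
    rw [hM1, hA0, hAn1] at h
    omega
  -- moment 2
  have hM2 : ∑ c : ↥C, (wt c.1) ^ 2 = n * 2 ^ (k - 1) + n * ((n - 1) * 2 ^ (k - 2)) := by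
    have h1 : ∑ c : ↥C, (wt c.1) ^ 2 = ∑ c : ↥C, ∑ i : Fin n, ∑ j : Fin n,
        if c.1 i ≠ 0 ∧ c.1 j ≠ 0 then 1 else 0 := by
      refine Finset.sum_congr rfl fun c _ => ?_
      rw [wt_eq_card, Finset.card_filter, pow_two, Finset.sum_mul_sum]
      refine Finset.sum_congr rfl fun i _ => Finset.sum_congr rfl fun j _ => ?_
      by_cases h1 : c.1 i ≠ 0 <;> by_cases h2 : c.1 j ≠ 0 <;> simp [h1, h2]
    rw [h1, Finset.sum_comm]
    have h2 : ∀ i : Fin n, (∑ c : ↥C, ∑ j : Fin n, if c.1 i ≠ 0 ∧ c.1 j ≠ 0 then 1 else 0)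
        = 2 ^ (k - 1) + (n - 1) * 2 ^ (k - 2) := by
      intro i
      rw [Finset.sum_comm]
      have h3 : ∀ j : Fin n, (∑ c : ↥C, if c.1 i ≠ 0 ∧ c.1 j ≠ 0 then 1 else 0)
          = #(univ.filter fun c : ↥C => c.1 i ≠ 0 ∧ c.1 j ≠ 0) := by
        intro j
        rw [← Finset.card_filter]
      rw [Finset.sum_congr rfl fun j _ => h3 j]
      rw [← Finset.add_sum_erase univ _ (Finset.mem_univ i)]
      have hii : (univ.filter fun c : ↥C => c.1 i ≠ 0 ∧ c.1 i ≠ 0)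
          = univ.filter fun c : ↥C => c.1 i ≠ 0 := by
        apply filter_congr
        intro c _
        exact and_self_iff
      rw [hii, hcoord i]
      have h4 : ∀ j ∈ univ.erase i,
          #(univ.filter fun c : ↥C => c.1 i ≠ 0 ∧ c.1 j ≠ 0) = 2 ^ (k - 2) := by
        intro j hj
        exact hpair i j (Finset.ne_of_mem_erase hj).symm
      rw [Finset.sum_congr rfl h4, Finset.sum_const, Finset.card_erase_of_mem
        (Finset.mem_univ i), Finset.card_univ, Fintype.card_fin, smul_eq_mul]
    rw [Finset.sum_congr rfl fun i _ => h2 i, Finset.sum_const, Finset.card_univ,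
      Fintype.card_fin, smul_eq_mul, Nat.mul_add]
  have e2 : A d * d ^ 2 + A (n - d) * (n - d) ^ 2 + n ^ 2
      = n * 2 ^ (k - 1) + n * ((n - 1) * 2 ^ (k - 2)) := by
    have h := hsum (fun w => w ^ 2)
    rw [hM2, hA0, hAn1] at h
    omega
  -- final algebra
  set v := n - d with hvdef
  have hv : d + v = n := by omega
  have hvz : (d : ℤ) + (v : ℤ) = (n : ℤ) := by exact_mod_cast hv
  rw [hpow1, hpow2] at e0
  rw [hpow2] at e1 e2 ⊢
  have h1p : (1 : ℕ) ≤ 2 * 2 ^ (k - 2) := Nat.one_le_iff_ne_zero.mpr (by positivity)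
  zify at e0
  zify [h1p, hn1] at e1 e2 ⊢
  rw [← hvz] at e1 e2 ⊢
  have key : ((A d : ℤ) - (2 * 2 ^ (k - 2) - 1)) * ((d : ℤ) - (v : ℤ)) = 0 := by
    linear_combination e1 - (v : ℤ) * e0
  have hne : ((d : ℤ) - (v : ℤ)) ≠ 0 := by
    have : (d : ℤ) < (v : ℤ) := by exact_mod_cast hdlt
    omega
  have ha : (A d : ℤ) = 2 * 2 ^ (k - 2) - 1 := by
    rcases mul_eq_zero.mp key with h | h
    · linarith [h]
    · exact absurd h hne
  have hb : (A v : ℤ) = 2 * 2 ^ (k - 2) - 1 := by linarith [e0, ha]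
  rw [ha, hb] at e2
  linear_combination (-2 : ℤ) * e2
end

section
/- Let C be a binary projective three-weight linear code of length n, dimension k and minimum distance d, with A_n(C) = 1. Then for each w ∈ {d, n − d}, the codewords of weight w in C hold a 2-(n, w, λ_w) design, where λ_w satisfies λ_w·n·(n − 1) = (2^{k−1} − 1)·w·(w − 1); that is, every 2-element set of coordinate positions is contained in the supports of exactly λ_w = (2^{k−1} − 1)·w·(w − 1)/(n·(n − 1)) codewords of C of weight w. -/
open Finset

section Helpers

variable {n : ℕ}

private lemma zm_cases (a : ZMod 2) : a = 0 ∨ a = 1 := by revert a; decide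
private lemma zm_ne {a : ZMod 2} : a ≠ 0 ↔ a = 1 := by revert a; decide
private lemma zm11 : (1 : ZMod 2) + 1 = 0 := by decide
private lemma zm_shift (u a b : ZMod 2) : u = a ↔ u + (a + b) = b := by revert u a b; decide

noncomputable def wtF (c : Fin n → ZMod 2) : ℕ :=
  (Finset.univ.filter (fun i => c i ≠ 0)).card

lemma wt_eq_wtF (c : Fin n → ZMod 2) : wt c = wtF c := by
  rw [wt, Nat.card_eq_fintype_card, Fintype.card_subtype, wtF]

lemma wtF_le (c : Fin n → ZMod 2) : wtF c ≤ n :=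
  le_trans (Finset.card_filter_le _ _) (by simp)

lemma wtF_eq_zero {c : Fin n → ZMod 2} : wtF c = 0 ↔ c = 0 := by
  simp [wtF, Finset.filter_eq_empty_iff, funext_iff]

def ones (n : ℕ) : Fin n → ZMod 2 := fun _ => 1

lemma wtF_ones : wtF (ones n) = n := by
  simp [wtF, ones]

lemma eq_ones_of_wtF {c : Fin n → ZMod 2} (h : wtF c = n) : c = ones n := by
  have hu : (univ.filter fun i => c i ≠ 0) = univ :=
    Finset.eq_univ_of_card _ (by rw [Fintype.card_fin]; exact h)
  funext i
  have hi : c i ≠ 0 := by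
    have hmem : i ∈ univ.filter (fun j => c j ≠ 0) := by rw [hu]; exact mem_univ i
    exact (Finset.mem_filter.mp hmem).2
  simpa [ones] using zm_ne.mp hi

lemma wtF_compl (c : Fin n → ZMod 2) : wtF (c + ones n) = n - wtF c := by
  have hpt : ∀ i, ((c + ones n) i ≠ 0) ↔ ¬ (c i ≠ 0) := by
    intro i
    rcases zm_cases (c i) with h | h <;> simp [Pi.add_apply, ones, h, zm11]
  have : (univ.filter fun i => (c + ones n) i ≠ 0) = univ \ (univ.filter fun i => c i ≠ 0) := by
    rw [← Finset.filter_not]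
    exact Finset.filter_congr fun i _ => by rw [hpt i]
  rw [wtF, this, Finset.card_sdiff_of_subset (Finset.filter_subset _ _), wtF, card_univ, Fintype.card_fin]

lemma add_add_self_s3 (c g : Fin n → ZMod 2) : c + g + g = c := by
  funext i
  have : ∀ a b : ZMod 2, a + b + b = a := by decide
  simp [Pi.add_apply, this]

lemma ones_p (p : Fin n) : ones n p = 1 := rfl

lemma natCard_eq {X : Type*} (S : Set X) (F : Finset X) (h : ∀ x, x ∈ F ↔ x ∈ S) :
    Nat.card S = F.card := by
  rw [Nat.card_coe_set_eq, ← Set.ncard_coe_finset F]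
  congr 1
  ext x
  simp [h]

lemma natCard_eq' {X : Type*} (P : X → Prop) (F : Finset X) (h : ∀ x, x ∈ F ↔ P x) :
    Nat.card {x // P x} = F.card :=
  natCard_eq {x | P x} F h

lemma wtF_eq_card_one (c : Fin n → ZMod 2) :
    wtF c = (univ.filter fun i => c i = 1).card := by
  rw [wtF]
  congr 1
  exact Finset.filter_congr fun i _ => by rw [zm_ne]

lemma card_filter_translate_s3 (C : Submodule (ZMod 2) (Fin n → ZMod 2)) (g : Fin n → ZMod 2)
    (hg : g ∈ C) (CC : Finset (Fin n → ZMod 2)) (hCC : ∀ c, c ∈ CC ↔ c ∈ C)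
    (P Q : (Fin n → ZMod 2) → Prop) [DecidablePred P] [DecidablePred Q]
    (hPQ : ∀ c, P c ↔ Q (c + g)) :
    (CC.filter P).card = (CC.filter Q).card := by
  apply Finset.card_bij' (fun c _ => c + g) (fun c _ => c + g)
  · intro a ha
    rw [Finset.mem_filter] at ha ⊢
    exact ⟨(hCC _).mpr (C.add_mem ((hCC _).mp ha.1) hg), (hPQ a).mp ha.2⟩
  · intro a ha
    rw [Finset.mem_filter] at ha ⊢
    refine ⟨(hCC _).mpr (C.add_mem ((hCC _).mp ha.1) hg), ?_⟩
    have := (hPQ (a + g))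
    rw [add_add_self_s3] at this
    exact this.mpr ha.2
  · intro a _; exact add_add_self_s3 a g
  · intro a _; exact add_add_self_s3 a g

lemma pair_swap (S : Finset (Fin n → ZMod 2)) (p : Fin n) :
    ∑ q ∈ univ.erase p, (S.filter (fun c => c p = 1 ∧ c q = 1)).card
      = ∑ c ∈ S.filter (fun c => c p = 1), (wtF c - 1) := by
  simp only [Finset.card_filter]
  rw [Finset.sum_comm, Finset.sum_filter]
  apply Finset.sum_congr rfl
  intro c _
  by_cases h : c p = 1
  · simp only [h, true_and, if_true]
    rw [← Finset.card_filter]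
    have heq : (univ.erase p).filter (fun q => c q = 1)
        = (univ.filter (fun q => c q = 1)).erase p := by
      ext i; simp [Finset.mem_erase, and_comm]
    rw [heq, Finset.card_erase_of_mem (by simp [h]), ← wtF_eq_card_one]
  · simp [h]

lemma pair_swap2 (S : Finset (Fin n → ZMod 2)) :
    ∑ p, ∑ q ∈ univ.erase p, (S.filter (fun c => c p = 1 ∧ c q = 1)).card
      = ∑ c ∈ S, wtF c * (wtF c - 1) := by
  have h1 : ∀ p, ∑ q ∈ univ.erase p, (S.filter (fun c => c p = 1 ∧ c q = 1)).card
      = ∑ c ∈ S, (if c p = 1 then wtF c - 1 else 0) := by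
    intro p
    rw [pair_swap, Finset.sum_filter]
  calc ∑ p, ∑ q ∈ univ.erase p, (S.filter (fun c => c p = 1 ∧ c q = 1)).card
      = ∑ p, ∑ c ∈ S, (if c p = 1 then wtF c - 1 else 0) := Finset.sum_congr rfl fun p _ => h1 p
    _ = ∑ c ∈ S, ∑ p, (if c p = 1 then wtF c - 1 else 0) := Finset.sum_comm
    _ = ∑ c ∈ S, wtF c * (wtF c - 1) := by
        apply Finset.sum_congr rfl
        intro c _
        rw [← Finset.sum_filter, Finset.sum_const, smul_eq_mul, ← wtF_eq_card_one]

lemma incl_excl (T : Finset (Fin n → ZMod 2)) (p q : Fin n) :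
    (T.filter (fun c => c p = 0 ∧ c q = 0)).card + (T.filter (fun c => c p = 1)).card
      + (T.filter (fun c => c q = 1)).card
    = T.card + (T.filter (fun c => c p = 1 ∧ c q = 1)).card := by
  simp only [Finset.card_filter]
  rw [Finset.card_eq_sum_ones, ← Finset.sum_add_distrib, ← Finset.sum_add_distrib,
    ← Finset.sum_add_distrib]
  apply Finset.sum_congr rfl
  intro c _
  rcases zm_cases (c p) with h | h <;> rcases zm_cases (c q) with h' | h' <;> simp [h, h']

end Helpers

private lemma key_cancel {x y x' y' D M : ℕ} (hDM : D ≠ M) (hD : 1 ≤ D) (hM : 1 ≤ M)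
    (h1n : x + y = x' + y')
    (h2n : x * (D - 1) + y * (M - 1) = x' * (D - 1) + y' * (M - 1)) :
    x = x' := by
  have h1 : (x : ℤ) + y = x' + y' := by exact_mod_cast h1n
  have h2 : (x : ℤ) * ((D : ℤ) - 1) + y * ((M : ℤ) - 1)
      = x' * ((D : ℤ) - 1) + y' * ((M : ℤ) - 1) := by
    zify [hD, hM] at h2n
    exact h2n
  have h3 : ((x : ℤ) - x') * ((D : ℤ) - M) = 0 := by
    linear_combination h2 + (1 - (M : ℤ)) * h1
  have h4 : (x : ℤ) = x' := by
    rcases mul_eq_zero.mp h3 with h | h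
    · linarith
    · exfalso
      have hdmz : (D : ℤ) = M := by linarith
      exact hDM (by exact_mod_cast hdmz)
  exact_mod_cast h4


set_option maxHeartbeats 4000000 in
theorem designs_from_projective_three_weight (n k d : ℕ) (C : Submodule (ZMod 2) (Fin n → ZMod 2))
    (hk : Module.finrank (ZMod 2) C = k)
    (hd : IsMinDist (C : Set (Fin n → ZMod 2)) d)
    (hproj : IsProjective (C : Set (Fin n → ZMod 2)))
    (h3 : numNonzeroWeights (C : Set (Fin n → ZMod 2)) = 3)
    (hAn : weightCount (C : Set (Fin n → ZMod 2)) n = 1) :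
    ∀ w ∈ ({d, n - d} : Set ℕ), ∃ lam : ℕ,
      HoldsTwoDesign (C : Set (Fin n → ZMod 2)) w lam ∧
      lam * (n * (n - 1)) = (2 ^ (k - 1) - 1) * (w * (w - 1)) := by
  classical
  obtain ⟨hdex, hdmin'⟩ := hd
  -- Finset version of the code
  have hfin : (C : Set (Fin n → ZMod 2)).Finite := Set.toFinite _
  set CC : Finset (Fin n → ZMod 2) := hfin.toFinset with hCCdef
  have hCC : ∀ c, c ∈ CC ↔ c ∈ C := fun c => hfin.mem_toFinset
  have h0CC : (0 : Fin n → ZMod 2) ∈ CC := (hCC 0).mpr (zero_mem C)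
  -- code size
  have hCCcard : CC.card = 2 ^ k := by
    haveI : Fintype C := Fintype.ofFinite _
    have h1 : Nat.card (C : Set (Fin n → ZMod 2)) = CC.card := natCard_eq _ _ hCC
    have h2 : Nat.card (C : Set (Fin n → ZMod 2)) = Fintype.card C := Nat.card_eq_fintype_card
    rw [← h1, h2, Module.card_eq_pow_finrank (K := ZMod 2) (V := C), ZMod.card, hk]
  -- minimum distance data
  obtain ⟨cd, hcdC, hcd0, hcdw⟩ := hdex
  rw [wt_eq_wtF] at hcdw
  have hdmin : ∀ c, c ∈ C → c ≠ 0 → d ≤ wtF c := by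
    intro c h1 h2
    have := hdmin' c h1 h2
    rwa [wt_eq_wtF] at this
  have hwtF0 : wtF (0 : Fin n → ZMod 2) = 0 := wtF_eq_zero.mpr rfl
  have hd1 : 1 ≤ d := by
    rcases Nat.eq_zero_or_pos d with h | h
    · exfalso
      exact hcd0 (wtF_eq_zero.mp (by rw [hcdw, h]))
    · exact h
  have hdn : d ≤ n := hcdw ▸ wtF_le cd
  -- the all-ones codeword
  have honesC : ones n ∈ C := by
    have hne : Nat.card {c : Fin n → ZMod 2 // c ∈ (C : Set (Fin n → ZMod 2)) ∧ wt c = n} ≠ 0 := by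
      have : Nat.card {c : Fin n → ZMod 2 // c ∈ (C : Set (Fin n → ZMod 2)) ∧ wt c = n} = 1 := hAn
      omega
    obtain ⟨⟨c1, hc1C, hc1w⟩⟩ := (Nat.card_ne_zero.mp hne).1
    rw [wt_eq_wtF] at hc1w
    have : c1 = ones n := eq_ones_of_wtF hc1w
    rw [← this]
    exact hc1C
  -- the set of nonzero weights
  set W : Set ℕ := {i : ℕ | 1 ≤ i ∧ weightCount (C : Set (Fin n → ZMod 2)) i ≠ 0} with hWdef
  have hW3 : W.ncard = 3 := by
    rw [← Nat.card_coe_set_eq]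
    exact h3
  have hWmem : ∀ c, c ∈ C → c ≠ 0 → wtF c ∈ W := by
    intro c hc h0
    refine ⟨?_, ?_⟩
    · have : wtF c ≠ 0 := fun h => h0 (wtF_eq_zero.mp h)
      omega
    · show Nat.card {c' : Fin n → ZMod 2 // c' ∈ (C : Set (Fin n → ZMod 2)) ∧ wt c' = wtF c} ≠ 0
      rw [Nat.card_ne_zero]
      exact ⟨⟨⟨c, hc, by rw [wt_eq_wtF]⟩⟩, inferInstance⟩
  have hWex : ∀ i ∈ W, ∃ c, c ∈ C ∧ c ≠ 0 ∧ wtF c = i := by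
    intro i hi
    obtain ⟨h1, h2⟩ := hi
    have h2' : Nat.card {c : Fin n → ZMod 2 // c ∈ (C : Set (Fin n → ZMod 2)) ∧ wt c = i} ≠ 0 := h2
    rw [Nat.card_ne_zero] at h2'
    obtain ⟨⟨c, hcC, hcw⟩⟩ := h2'.1
    rw [wt_eq_wtF] at hcw
    refine ⟨c, hcC, ?_, hcw⟩
    intro h0
    rw [h0, hwtF0] at hcw
    omega
  have hWfin : W.Finite := (Set.finite_Icc 1 n).subset (fun i hi => by
    obtain ⟨c, _, _, hcw⟩ := hWex i hi
    exact Set.mem_Icc.mpr ⟨hi.1, hcw ▸ wtF_le c⟩)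
  have hdW : d ∈ W := hcdw ▸ hWmem cd hcdC hcd0
  have hdltn : d < n := by
    rcases Nat.lt_or_ge d n with h | h
    · exact h
    · exfalso
      have hsub : W ⊆ {n} := by
        intro i hi
        obtain ⟨c, hcC, hc0, hcw⟩ := hWex i hi
        have h1 := hdmin c hcC hc0
        have h2 := wtF_le c
        simp only [Set.mem_singleton_iff]
        omega
      have := Set.ncard_le_ncard hsub (Set.finite_singleton n)
      rw [hW3, Set.ncard_singleton] at this
      omega
  have honesne : ones n ≠ 0 := by
    intro h
    have h0 : wtF (ones n) = 0 := wtF_eq_zero.mpr h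
    rw [wtF_ones] at h0
    omega
  have hnW : n ∈ W := by
    have := hWmem (ones n) honesC honesne
    rwa [wtF_ones] at this
  set m := n - d with hmdef
  have hm1 : 1 ≤ m := by omega
  have hmltn : m < n := by omega
  have hcmC : cd + ones n ∈ C := C.add_mem hcdC honesC
  have hcmw : wtF (cd + ones n) = m := by rw [wtF_compl, hcdw]
  have hcm0 : cd + ones n ≠ 0 := by
    intro h
    have := wtF_eq_zero.mpr h
    omega
  have hmW : m ∈ W := hcmw ▸ hWmem _ hcmC hcm0
  have hdm : d ≠ m := by
    intro hdm'
    have hn2d : n = 2 * d := by omega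
    have hnsub : ¬ W ⊆ ({d, n} : Set ℕ) := by
      intro hsub
      have := Set.ncard_le_ncard hsub ((Set.finite_singleton n).insert d)
      rw [hW3, Set.ncard_pair (by omega : d ≠ n)] at this
      omega
    obtain ⟨x, hxW, hx⟩ := Set.not_subset.mp hnsub
    simp only [Set.mem_insert_iff, Set.mem_singleton_iff, not_or] at hx
    obtain ⟨hxd, hxn⟩ := hx
    obtain ⟨cx, hcxC, hcx0, hcxw⟩ := hWex x hxW
    have hx1 : 1 ≤ x := hxW.1
    have hxle : x ≤ n := hcxw ▸ wtF_le cx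
    have hsub2 : ({d, n, x} : Set ℕ) ⊆ W := by
      intro i hi
      simp only [Set.mem_insert_iff, Set.mem_singleton_iff] at hi
      rcases hi with rfl | rfl | rfl
      · exact hdW
      · exact hnW
      · exact hxW
    have hW_eq : ({d, n, x} : Set ℕ) = W := by
      apply Set.eq_of_subset_of_ncard_le hsub2 _ hWfin
      rw [hW3]
      have hcard3 : ({d, n, x} : Set ℕ).ncard = 3 := by
        rw [Set.ncard_insert_of_notMem (by
            simp only [Set.mem_insert_iff, Set.mem_singleton_iff, not_or]
            omega) ((Set.finite_singleton x).insert n),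
          Set.ncard_pair (by omega : n ≠ x)]
      omega
    have hyC : cx + ones n ∈ C := C.add_mem hcxC honesC
    have hyw : wtF (cx + ones n) = n - x := by rw [wtF_compl, hcxw]
    have hy0 : cx + ones n ≠ 0 := by
      intro h
      have := wtF_eq_zero.mpr h
      omega
    have hnx : n - x ∈ W := hyw ▸ hWmem _ hyC hy0
    rw [← hW_eq] at hnx
    simp only [Set.mem_insert_iff, Set.mem_singleton_iff] at hnx
    omega
  have hdn' : d ≠ n := by omega
  have hmn' : m ≠ n := by omega
  have hn3 : 3 ≤ n := by omega
  -- W is exactly {d, m, n}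
  have hWeq : W = ({d, m, n} : Set ℕ) := by
    symm
    apply Set.eq_of_subset_of_ncard_le _ _ hWfin
    · intro i hi
      simp only [Set.mem_insert_iff, Set.mem_singleton_iff] at hi
      rcases hi with rfl | rfl | rfl
      · exact hdW
      · exact hmW
      · exact hnW
    · rw [hW3]
      have : ({d, m, n} : Set ℕ).ncard = 3 := by
        rw [Set.ncard_insert_of_notMem (by
            simp only [Set.mem_insert_iff, Set.mem_singleton_iff, not_or]
            omega) ((Set.finite_singleton n).insert m),
          Set.ncard_pair (by omega : m ≠ n)]
      omega
  have hweights : ∀ c, c ∈ C → c ≠ 0 → wtF c = d ∨ wtF c = m ∨ wtF c = n := by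
    intro c hc h0
    have := hWmem c hc h0
    rw [hWeq] at this
    simpa using this
  -- existence of codewords with prescribed coordinates
  have hex1 : ∀ p : Fin n, ∃ x, x ∈ C ∧ x p = 1 := by
    intro p
    by_contra hcon
    push_neg at hcon
    have hall : ∀ x ∈ C, x p = 0 := by
      intro x hx
      rcases zm_cases (x p) with h | h
      · exact h
      · exact absurd h (hcon x hx)
    set e : Fin n → ZMod 2 := Pi.single p 1 with hedef
    have hept : ∀ i, e i = if i = p then 1 else 0 := by
      intro i
      rw [hedef]
      exact Pi.single_apply p 1 i
    have hdual : e ∈ dualCode (C : Set (Fin n → ZMod 2)) := by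
      intro c hc
      rw [finsum_eq_sum_of_fintype]
      have hpt : ∀ i, e i * c i = if i = p then c i else 0 := by
        intro i
        rw [hept i]
        rcases eq_or_ne i p with rfl | h
        · simp
        · simp [h]
      rw [Finset.sum_congr rfl fun i _ => hpt i, Finset.sum_ite_eq' Finset.univ p c]
      simp [hall c hc]
    have hne0 : e ≠ 0 := by
      intro h
      have h2 := congrFun h p
      rw [hept p] at h2
      simp at h2
    have h3' := hproj _ hdual hne0
    rw [wt_eq_wtF] at h3'
    have hw1 : wtF e = 1 := by
      rw [wtF]
      have hfe : (Finset.univ.filter fun i => e i ≠ 0) = {p} := by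
        ext i
        simp only [Finset.mem_filter, Finset.mem_singleton, Finset.mem_univ, true_and]
        rw [hept i]
        rcases eq_or_ne i p with rfl | h
        · simp
        · simp [h]
      rw [hfe, Finset.card_singleton]
    omega
  have hex2 : ∀ p q : Fin n, p ≠ q → ∃ z, z ∈ C ∧ z p + z q = 1 := by
    intro p q hpq
    by_contra hcon
    push_neg at hcon
    have hall : ∀ z ∈ C, z p + z q = 0 := by
      intro z hz
      rcases zm_cases (z p + z q) with h | h
      · exact h
      · exact absurd h (hcon z hz)
    set v : Fin n → ZMod 2 := (Pi.single p 1 : Fin n → ZMod 2) + (Pi.single q 1 : Fin n → ZMod 2) with hvdef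
    have hvpt : ∀ i, v i = (if i = p then 1 else 0) + (if i = q then 1 else 0) := by
      intro i
      rw [hvdef, Pi.add_apply, Pi.single_apply, Pi.single_apply]
    have hdual : v ∈ dualCode (C : Set (Fin n → ZMod 2)) := by
      intro c hc
      rw [finsum_eq_sum_of_fintype]
      have hpt : ∀ i, v i * c i
          = (if i = p then c i else 0) + (if i = q then c i else 0) := by
        intro i
        rw [hvpt i, add_mul]
        rcases eq_or_ne i p with rfl | h1
        · rcases eq_or_ne i q with rfl | h2
          · exact absurd rfl hpq
          · simp [h2]
        · rcases eq_or_ne i q with rfl | h2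
          · simp [h1]
          · simp [h1, h2]
      rw [Finset.sum_congr rfl fun i _ => hpt i, Finset.sum_add_distrib,
        Finset.sum_ite_eq' Finset.univ p c, Finset.sum_ite_eq' Finset.univ q c]
      simpa using hall c hc
    have hvp : v p = 1 := by
      rw [hvpt p]
      simp [hpq]
    have hvq : v q = 1 := by
      rw [hvpt q]
      simp [Ne.symm hpq]
    have hne0 : v ≠ 0 := by
      intro h
      have h2 := congrFun h p
      rw [hvp] at h2
      simp at h2
    have h3' := hproj _ hdual hne0
    rw [wt_eq_wtF] at h3'
    have hw2 : wtF v = 2 := by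
      rw [wtF]
      have hfe : (Finset.univ.filter fun i => v i ≠ 0) = {p, q} := by
        ext i
        simp only [Finset.mem_filter, Finset.mem_univ, true_and, Finset.mem_insert,
          Finset.mem_singleton]
        rw [hvpt i]
        rcases eq_or_ne i p with rfl | h1
        · simp [hpq]
        · rcases eq_or_ne i q with rfl | h2
          · simp [h1]
          · simp [h1, h2]
      rw [hfe, Finset.card_pair hpq]
    omega
  -- surjectivity onto pairs of coordinates
  have hsurj : ∀ p q : Fin n, p ≠ q → ∀ v1 v2 : ZMod 2,
      ∃ g, g ∈ C ∧ g p = v1 ∧ g q = v2 := by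
    intro p q hpq v1 v2
    obtain ⟨x, hxC, hxp⟩ := hex1 p
    obtain ⟨y, hyC, hyq⟩ := hex1 q
    obtain ⟨z, hzC, hz⟩ := hex2 p q hpq
    rcases zm_cases (x q) with hxq | hxq <;>
    rcases zm_cases (y p) with hyp | hyp <;>
    rcases zm_cases (z p) with hzp | hzp <;>
    rcases zm_cases (z q) with hzq | hzq <;>
    rcases zm_cases v1 with rfl | rfl <;>
    rcases zm_cases v2 with rfl | rfl <;>
    first
    | (exfalso; rw [hzp, hzq] at hz; revert hz; decide)
    | (refine ⟨0, C.zero_mem, ?_, ?_⟩ <;> (simp; done))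
    | (refine ⟨x, hxC, ?_, ?_⟩ <;> (simp [hxp, hxq, zm11]; done))
    | (refine ⟨y, hyC, ?_, ?_⟩ <;> (simp [hyp, hyq, zm11]; done))
    | (refine ⟨z, hzC, ?_, ?_⟩ <;> (simp [hzp, hzq, zm11]; done))
    | (refine ⟨x + y, C.add_mem hxC hyC, ?_, ?_⟩ <;> (simp [Pi.add_apply, hxp, hxq, hyp, hyq, zm11]; done))
    | (refine ⟨x + z, C.add_mem hxC hzC, ?_, ?_⟩ <;> (simp [Pi.add_apply, hxp, hxq, hzp, hzq, zm11]; done))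
    | (refine ⟨y + z, C.add_mem hyC hzC, ?_, ?_⟩ <;> (simp [Pi.add_apply, hyp, hyq, hzp, hzq, zm11]; done))
    | (refine ⟨x + y + z, C.add_mem (C.add_mem hxC hyC) hzC, ?_, ?_⟩ <;> (simp [Pi.add_apply, hxp, hxq, hyp, hyq, hzp, hzq, zm11]; done))
  -- each pair fiber has size 2^k / 4
  have hfiber4 : ∀ p q : Fin n, p ≠ q → ∀ v1 v2 : ZMod 2,
      (CC.filter fun c => c p = v1 ∧ c q = v2).card * 4 = 2 ^ k := by
    intro p q hpq v1 v2
    have key : ∀ a1 a2 : ZMod 2,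
        (CC.filter fun c => c p = a1 ∧ c q = a2).card
          = (CC.filter fun c => c p = v1 ∧ c q = v2).card := by
      intro a1 a2
      obtain ⟨g, hgC, hgp, hgq⟩ := hsurj p q hpq (a1 + v1) (a2 + v2)
      apply card_filter_translate_s3 C g hgC CC hCC
      intro c
      rw [Pi.add_apply, Pi.add_apply, hgp, hgq]
      exact and_congr (zm_shift _ _ _) (zm_shift _ _ _)
    have hsum : CC.card = ∑ v ∈ (Finset.univ : Finset (ZMod 2 × ZMod 2)),
        (CC.filter fun c => (c p, c q) = v).card :=
      Finset.card_eq_sum_card_fiberwise (fun c _ => Finset.mem_univ _)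
    have hconv : ∀ v : ZMod 2 × ZMod 2, (CC.filter fun c => (c p, c q) = v)
        = CC.filter fun c => c p = v.1 ∧ c q = v.2 := by
      intro v
      apply Finset.filter_congr
      intro c _
      simp [Prod.ext_iff]
    rw [Finset.sum_congr rfl (fun v _ => by rw [hconv v, key v.1 v.2])] at hsum
    rw [Finset.sum_const, smul_eq_mul] at hsum
    have hc4 : (Finset.univ : Finset (ZMod 2 × ZMod 2)).card = 4 := by decide
    rw [hc4, hCCcard] at hsum
    linarith [hsum]
  set p0 : Fin n := ⟨0, by omega⟩ with hp0def
  set q0 : Fin n := ⟨1, by omega⟩ with hq0def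
  have hp0q0 : p0 ≠ q0 := by
    intro h
    rw [Fin.ext_iff] at h
    simp [hp0def, hq0def] at h
  have hk2 : 2 ≤ k := by
    by_contra hcon
    push_neg at hcon
    have h2k : 2 ^ k ≤ 2 ^ 1 := Nat.pow_le_pow_right (by norm_num) (by omega)
    have h00 := hfiber4 p0 q0 hp0q0 0 0
    have hpos : 0 < (CC.filter fun c => c p0 = 0 ∧ c q0 = 0).card :=
      Finset.card_pos.mpr ⟨0, Finset.mem_filter.mpr ⟨h0CC, by simp⟩⟩
    have h21 : (2:ℕ) ^ 1 = 2 := by norm_num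
    linarith
  have he2 : 2 ^ k = 2 ^ (k - 2) * 4 := by
    conv_lhs => rw [show k = (k - 2) + 2 from by omega]
    rw [pow_add]
    norm_num
  have he1 : 2 ^ (k - 1) = 2 ^ (k - 2) * 2 := by
    rw [show k - 1 = (k - 2) + 1 from by omega, pow_add]
    norm_num
  have hpair : ∀ p q : Fin n, p ≠ q → ∀ v1 v2 : ZMod 2,
      (CC.filter fun c => c p = v1 ∧ c q = v2).card = 2 ^ (k - 2) := by
    intro p q hpq v1 v2
    have h := hfiber4 p q hpq v1 v2
    linarith [h, he2]
  have hsingle : ∀ p : Fin n, (CC.filter fun c => c p = 1).card = 2 ^ (k - 2) * 2 := by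
    intro p
    obtain ⟨q, hq⟩ := Fintype.exists_ne_of_one_lt_card (by rw [Fintype.card_fin]; omega) p
    have hsplit : (CC.filter fun c => c p = 1).card
        = (CC.filter fun c => c p = 1 ∧ c q = 0).card
          + (CC.filter fun c => c p = 1 ∧ c q = 1).card := by
      simp only [Finset.card_filter]
      rw [← Finset.sum_add_distrib]
      apply Finset.sum_congr rfl
      intro c _
      rcases zm_cases (c p) with h | h <;> rcases zm_cases (c q) with h' | h' <;> simp [h, h']
    rw [hsplit, hpair p q (Ne.symm hq) 1 0, hpair p q (Ne.symm hq) 1 1]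
    ring
  have honesCC : ones n ∈ CC := (hCC _).mpr honesC
  -- the weight-n fiber of any set containing the all-ones word
  have hnfib : ∀ S : Finset (Fin n → ZMod 2), ones n ∈ S →
      S.filter (fun c => wtF c = n) = {ones n} := by
    intro S hS1
    ext c
    simp only [Finset.mem_filter, Finset.mem_singleton]
    constructor
    · rintro ⟨_, hw⟩
      exact eq_ones_of_wtF hw
    · rintro rfl
      exact ⟨hS1, wtF_ones⟩
  have hmap3 : ∀ S : Finset (Fin n → ZMod 2), (∀ c ∈ S, c ∈ C) →
      (0 : Fin n → ZMod 2) ∉ S → ∀ c ∈ S, wtF c ∈ ({d, m, n} : Finset ℕ) := by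
    intro S hSC hS0 c hc
    have hc0 : c ≠ 0 := fun h => hS0 (h ▸ hc)
    rcases hweights c (hSC c hc) hc0 with h | h | h <;> simp [h]
  have hdmninsert : ({d, m, n} : Finset ℕ) = insert d (insert m ({n} : Finset ℕ)) := rfl
  -- partition of sets of nonzero codewords by weight
  have hpart3 : ∀ S : Finset (Fin n → ZMod 2), (∀ c ∈ S, c ∈ C) →
      (0 : Fin n → ZMod 2) ∉ S → ones n ∈ S →
      S.card = (S.filter fun c => wtF c = d).card + (S.filter fun c => wtF c = m).card + 1 := by
    intro S hSC hS0 hS1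
    have h := Finset.card_eq_sum_card_fiberwise (hmap3 S hSC hS0)
    rw [hdmninsert, Finset.sum_insert (by
        simp only [Finset.mem_insert, Finset.mem_singleton]
        push_neg
        exact ⟨hdm, hdn'⟩),
      Finset.sum_insert (by simp only [Finset.mem_singleton]; exact hmn'),
      Finset.sum_singleton, hnfib S hS1,
      Finset.card_singleton] at h
    linarith [h]
  have hsum3 : ∀ S : Finset (Fin n → ZMod 2), (∀ c ∈ S, c ∈ C) →
      (0 : Fin n → ZMod 2) ∉ S → ones n ∈ S →
      ∑ c ∈ S, (wtF c - 1)
        = (S.filter fun c => wtF c = d).card * (d - 1)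
          + (S.filter fun c => wtF c = m).card * (m - 1) + (n - 1) := by
    intro S hSC hS0 hS1
    have hcl : ∀ b : ℕ, ∑ c ∈ S.filter (fun c => wtF c = b), (wtF c - 1)
        = (S.filter fun c => wtF c = b).card * (b - 1) := by
      intro b
      rw [Finset.sum_congr rfl (fun c hc => by rw [(Finset.mem_filter.mp hc).2]),
        Finset.sum_const, smul_eq_mul]
    have h := Finset.sum_fiberwise_of_maps_to (hmap3 S hSC hS0) (fun c => wtF c - 1)
    rw [hdmninsert, Finset.sum_insert (by
        simp only [Finset.mem_insert, Finset.mem_singleton]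
        push_neg
        exact ⟨hdm, hdn'⟩),
      Finset.sum_insert (by simp only [Finset.mem_singleton]; exact hmn'),
      Finset.sum_singleton, hcl d, hcl m,
      hnfib S hS1] at h
    rw [← h, Finset.sum_singleton, wtF_ones]
    linarith
  -- facts about the single-coordinate sets
  have hSpC : ∀ p : Fin n, ∀ c ∈ CC.filter (fun c => c p = 1), c ∈ C :=
    fun p c hc => (hCC c).mp (Finset.mem_filter.mp hc).1
  have hSp0 : ∀ p : Fin n, (0 : Fin n → ZMod 2) ∉ CC.filter (fun c => c p = 1) := by
    intro p h
    have := (Finset.mem_filter.mp h).2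
    simp at this
  have hSp1 : ∀ p : Fin n, ones n ∈ CC.filter (fun c => c p = 1) :=
    fun p => Finset.mem_filter.mpr ⟨honesCC, rfl⟩
  have hE2 : ∀ p : Fin n,
      ((CC.filter fun c => c p = 1).filter fun c => wtF c = d).card
        + ((CC.filter fun c => c p = 1).filter fun c => wtF c = m).card + 1
      = 2 ^ (k - 2) * 2 := by
    intro p
    have h := hpart3 _ (hSpC p) (hSp0 p) (hSp1 p)
    rw [hsingle p] at h
    linarith [h]
  -- pair sets
  have hSpqC : ∀ p q : Fin n, ∀ c ∈ CC.filter (fun c => c p = 1 ∧ c q = 1), c ∈ C :=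
    fun p q c hc => (hCC c).mp (Finset.mem_filter.mp hc).1
  have hSpq0 : ∀ p q : Fin n, (0 : Fin n → ZMod 2) ∉ CC.filter (fun c => c p = 1 ∧ c q = 1) := by
    intro p q h
    have := (Finset.mem_filter.mp h).2.1
    simp at this
  have hSpq1 : ∀ p q : Fin n, ones n ∈ CC.filter (fun c => c p = 1 ∧ c q = 1) :=
    fun p q => Finset.mem_filter.mpr ⟨honesCC, rfl, rfl⟩
  have hE4 : ∀ p q : Fin n, p ≠ q →
      ((CC.filter fun c => c p = 1 ∧ c q = 1).filter fun c => wtF c = d).card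
        + ((CC.filter fun c => c p = 1 ∧ c q = 1).filter fun c => wtF c = m).card + 1
      = 2 ^ (k - 2) := by
    intro p q hpq
    have h := hpart3 _ (hSpqC p q) (hSpq0 p q) (hSpq1 p q)
    rw [hpair p q hpq 1 1] at h
    linarith [h]
  -- complement bijection: weight m with c p = 1 vs weight d with c p = 0
  have hwtshift : ∀ c : Fin n → ZMod 2, (wtF c = m ↔ wtF (c + ones n) = d) := by
    intro c
    rw [wtF_compl]
    have := wtF_le c
    omega
  have hwtshift' : ∀ c : Fin n → ZMod 2, (wtF c = d ↔ wtF (c + ones n) = m) := by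
    intro c
    rw [wtF_compl]
    have := wtF_le c
    omega
  have hzflip : ∀ a : ZMod 2, (a = 1 ↔ a + 1 = 0) ∧ (a = 0 ↔ a + 1 = 1) := by decide
  have hBmd : ∀ p : Fin n,
      ((CC.filter fun c => c p = 1).filter fun c => wtF c = m).card
        = ((CC.filter fun c => c p = 0).filter fun c => wtF c = d).card := by
    intro p
    rw [Finset.filter_filter, Finset.filter_filter]
    apply card_filter_translate_s3 C (ones n) honesC CC hCC
    intro c
    constructor
    · rintro ⟨h1, h2⟩
      refine ⟨?_, (hwtshift c).mp h2⟩
      rw [Pi.add_apply, ones_p]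
      exact ((hzflip (c p)).1).mp h1
    · rintro ⟨h1, h2⟩
      rw [Pi.add_apply, ones_p] at h1
      refine ⟨?_, ?_⟩
      · rcases zm_cases (c p) with h | h
        · exfalso; rw [h] at h1; exact absurd h1 (by decide)
        · exact h
      · have := (hwtshift c)
        rcases eq_or_ne (wtF c) m with h | h
        · exact h
        · exfalso
          have h3 := wtF_compl c
          have h4 := wtF_le c
          omega
  -- split the weight-d class by value at p
  have hAdsplit : ∀ p : Fin n,
      (CC.filter fun c => wtF c = d).card
        = ((CC.filter fun c => c p = 0).filter fun c => wtF c = d).card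
          + ((CC.filter fun c => c p = 1).filter fun c => wtF c = d).card := by
    intro p
    rw [Finset.filter_filter, Finset.filter_filter]
    simp only [Finset.card_filter]
    rw [← Finset.sum_add_distrib]
    apply Finset.sum_congr rfl
    intro c _
    rcases zm_cases (c p) with h | h <;> simp [h]
  -- moment equation at a single coordinate
  have hE5 : ∀ p : Fin n,
      ((CC.filter fun c => c p = 1).filter fun c => wtF c = d).card * (d - 1)
        + ((CC.filter fun c => c p = 1).filter fun c => wtF c = m).card * (m - 1) + (n - 1)
      = (n - 1) * 2 ^ (k - 2) := by
    intro p
    have hl : ∑ q ∈ Finset.univ.erase p, (CC.filter (fun c => c p = 1 ∧ c q = 1)).card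
        = (n - 1) * 2 ^ (k - 2) := by
      rw [Finset.sum_congr rfl (fun q hq =>
        hpair p q (Ne.symm (Finset.ne_of_mem_erase hq)) 1 1)]
      rw [Finset.sum_const, Finset.card_erase_of_mem (Finset.mem_univ p), Finset.card_univ,
        Fintype.card_fin, smul_eq_mul]
    rw [← hsum3 _ (hSpC p) (hSp0 p) (hSp1 p), ← pair_swap, hl]
  -- pair complement bijection
  have hNdM : ∀ p q : Fin n,
      ((CC.filter fun c => c p = 1 ∧ c q = 1).filter fun c => wtF c = d).card
        = ((CC.filter fun c => c p = 0 ∧ c q = 0).filter fun c => wtF c = m).card := by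
    intro p q
    rw [Finset.filter_filter, Finset.filter_filter]
    apply card_filter_translate_s3 C (ones n) honesC CC hCC
    intro c
    constructor
    · rintro ⟨⟨h1, h2⟩, h3⟩
      refine ⟨⟨?_, ?_⟩, (hwtshift' c).mp h3⟩
      · rw [Pi.add_apply, ones_p]
        exact ((hzflip (c p)).1).mp h1
      · rw [Pi.add_apply, ones_p]
        exact ((hzflip (c q)).1).mp h2
    · rintro ⟨⟨h1, h2⟩, h3⟩
      rw [Pi.add_apply, ones_p] at h1
      rw [Pi.add_apply, ones_p] at h2
      have hcp : c p = 1 := by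
        rcases zm_cases (c p) with h | h
        · exfalso; rw [h] at h1; exact absurd h1 (by decide)
        · exact h
      have hcq : c q = 1 := by
        rcases zm_cases (c q) with h | h
        · exfalso; rw [h] at h2; exact absurd h2 (by decide)
        · exact h
      refine ⟨⟨hcp, hcq⟩, ?_⟩
      have h4 := wtF_compl c
      have h5 := wtF_le c
      omega
  -- opaque counting functions
  obtain ⟨B, hB⟩ : ∃ B : ℕ → Fin n → ℕ, ∀ w p,
      B w p = ((CC.filter fun c => c p = 1).filter fun c => wtF c = w).card :=
    ⟨_, fun _ _ => rfl⟩
  obtain ⟨N, hN⟩ : ∃ N : ℕ → Fin n → Fin n → ℕ, ∀ w p q,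
      N w p q = ((CC.filter fun c => c p = 1 ∧ c q = 1).filter fun c => wtF c = w).card :=
    ⟨_, fun _ _ _ => rfl⟩
  obtain ⟨A, hA⟩ : ∃ A : ℕ → ℕ, ∀ w, A w = (CC.filter fun c => wtF c = w).card :=
    ⟨_, fun _ => rfl⟩
  obtain ⟨M, hM⟩ : ∃ M : Fin n → Fin n → ℕ, ∀ p q,
      M p q = ((CC.filter fun c => c p = 0 ∧ c q = 0).filter fun c => wtF c = m).card :=
    ⟨_, fun _ _ => rfl⟩
  have hE2' : ∀ p : Fin n, B d p + B m p + 1 = 2 ^ (k - 2) * 2 := by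
    intro p
    simp only [hB]
    exact hE2 p
  have hE5' : ∀ p : Fin n,
      B d p * (d - 1) + B m p * (m - 1) + (n - 1) = (n - 1) * 2 ^ (k - 2) := by
    intro p
    simp only [hB]
    exact hE5 p
  have hE4' : ∀ p q : Fin n, p ≠ q → N d p q + N m p q + 1 = 2 ^ (k - 2) := by
    intro p q hpq
    simp only [hN]
    exact hE4 p q hpq
  have hNdM' : ∀ p q : Fin n, N d p q = M p q := by
    intro p q
    simp only [hN, hM]
    exact hNdM p q
  have hie' : ∀ p q : Fin n, M p q + B m p + B m q = A m + N m p q := by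
    intro p q
    have hie := incl_excl (CC.filter fun c => wtF c = m) p q
    rw [Finset.filter_comm (fun c => wtF c = m) (fun c => c p = 0 ∧ c q = 0) CC,
      Finset.filter_comm (fun c => wtF c = m) (fun c => c p = 1) CC,
      Finset.filter_comm (fun c => wtF c = m) (fun c => c q = 1) CC,
      Finset.filter_comm (fun c => wtF c = m) (fun c => c p = 1 ∧ c q = 1) CC] at hie
    simp only [hM, hB, hN, hA]
    exact hie
  -- constancy of the weight-d count at a single coordinate
  have hBdconst : ∀ p p' : Fin n, B d p = B d p' := by
    intro p p'
    exact key_cancel (y := B m p) (y' := B m p') hdm hd1 hm1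
      (by linarith [hE2' p, hE2' p']) (by linarith [hE5' p, hE5' p'])
  have hBmconst : ∀ p p' : Fin n, B m p = B m p' := by
    intro p p'
    have h1 := hBdconst p p'
    have h2 := hE2' p
    have h3 := hE2' p'
    omega
  -- the key linear relation for pairs
  have hNkey : ∀ p q : Fin n, p ≠ q →
      2 * N d p q + 1 + (B m p + B m q) = 2 ^ (k - 2) + A m := by
    intro p q hpq
    have h1 := hE4' p q hpq
    have h2 := hNdM' p q
    have h3 := hie' p q
    omega
  -- constancy of the pair counts
  have hNdconst : ∀ p q p' q' : Fin n, p ≠ q → p' ≠ q' → N d p q = N d p' q' := by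
    intro p q p' q' hpq hp'q'
    have k1 := hNkey p q hpq
    have k2 := hNkey p' q' hp'q'
    have b1 := hBmconst p p'
    have b2 := hBmconst q q'
    omega
  have hNmconst : ∀ p q p' q' : Fin n, p ≠ q → p' ≠ q' → N m p q = N m p' q' := by
    intro p q p' q' hpq hp'q'
    have h1 := hNdconst p q p' q' hpq hp'q'
    have h2 := hE4' p q hpq
    have h3 := hE4' p' q' hp'q'
    omega
  -- sizes of the weight classes
  have hAd1 : A d + 1 = 2 ^ (k - 1) := by
    have h1 := hAdsplit p0
    have h2 := hBmd p0
    rw [← h2] at h1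
    have h1' : A d = B m p0 + B d p0 := by
      rw [hA]
      simp only [hB]
      exact h1
    have h3 := hE2' p0
    clear h1 h2
    omega
  have hAm1 : A m + 1 = 2 ^ (k - 1) := by
    have herase_card : (CC.erase 0).card + 1 = 2 ^ k := by
      rw [Finset.card_erase_add_one h0CC, hCCcard]
    have hfilters : ∀ w : ℕ, 1 ≤ w →
        (CC.erase 0).filter (fun c => wtF c = w) = CC.filter (fun c => wtF c = w) := by
      intro w hw
      ext c
      simp only [Finset.mem_filter, Finset.mem_erase]
      constructor
      · rintro ⟨⟨_, h1⟩, h2⟩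
        exact ⟨h1, h2⟩
      · rintro ⟨h1, h2⟩
        refine ⟨⟨?_, h1⟩, h2⟩
        intro h0
        rw [h0, hwtF0] at h2
        omega
    have hp := hpart3 (CC.erase 0)
      (fun c hc => (hCC c).mp (Finset.mem_of_mem_erase hc))
      (Finset.notMem_erase 0 CC)
      (Finset.mem_erase.mpr ⟨honesne, honesCC⟩)
    rw [hfilters d hd1, hfilters m hm1] at hp
    have hp' : (CC.erase 0).card = A d + A m + 1 := by
      rw [hA, hA]
      exact hp
    clear hp
    omega
  -- the global double count
  have hfinal : ∀ w lam : ℕ,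
      (∀ p q : Fin n, p ≠ q →
        ((CC.filter fun c => c p = 1 ∧ c q = 1).filter fun c => wtF c = w).card = lam) →
      lam * (n * (n - 1)) = (CC.filter fun c => wtF c = w).card * (w * (w - 1)) := by
    intro w lam hlam
    have h2 := pair_swap2 (CC.filter fun c => wtF c = w)
    have hswap : ∀ p q : Fin n,
        ((CC.filter fun c => wtF c = w).filter fun c => c p = 1 ∧ c q = 1)
          = ((CC.filter fun c => c p = 1 ∧ c q = 1).filter fun c => wtF c = w) :=
      fun p q => Finset.filter_comm _ _ _
    have hlhs : ∑ p : Fin n, ∑ q ∈ Finset.univ.erase p,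
        ((CC.filter fun c => wtF c = w).filter fun c => c p = 1 ∧ c q = 1).card
        = n * ((n - 1) * lam) := by
      rw [Finset.sum_congr rfl (fun p _ => ?_)]
      · rw [Finset.sum_const, Finset.card_univ, Fintype.card_fin, smul_eq_mul]
      · rw [Finset.sum_congr rfl (fun q hq => by
          rw [hswap p q, hlam p q (Ne.symm (Finset.ne_of_mem_erase hq))])]
        rw [Finset.sum_const, Finset.card_erase_of_mem (Finset.mem_univ p), Finset.card_univ,
          Fintype.card_fin, smul_eq_mul]
    have hrhs : ∑ c ∈ CC.filter (fun c => wtF c = w), wtF c * (wtF c - 1)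
        = (CC.filter fun c => wtF c = w).card * (w * (w - 1)) := by
      rw [Finset.sum_congr rfl (fun c hc => by rw [(Finset.mem_filter.mp hc).2]),
        Finset.sum_const, smul_eq_mul]
    rw [hlhs, hrhs] at h2
    calc lam * (n * (n - 1)) = n * ((n - 1) * lam) := by ring
      _ = (CC.filter fun c => wtF c = w).card * (w * (w - 1)) := h2
  -- conversion of the design counting sets
  have hconv : ∀ (w : ℕ) (p q : Fin n),
      Nat.card {c : Fin n → ZMod 2 // c ∈ (C : Set (Fin n → ZMod 2)) ∧ wt c = w ∧ c p ≠ 0 ∧ c q ≠ 0}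
        = ((CC.filter fun c => c p = 1 ∧ c q = 1).filter fun c => wtF c = w).card := by
    intro w p q
    apply natCard_eq'
    intro x
    simp only [Finset.mem_filter]
    constructor
    · rintro ⟨⟨h1, h2, h3⟩, h4⟩
      exact ⟨(hCC x).mp h1, by rw [wt_eq_wtF]; exact h4, zm_ne.mpr h2, zm_ne.mpr h3⟩
    · rintro ⟨h1, h2, h3, h4⟩
      rw [wt_eq_wtF] at h2
      exact ⟨⟨(hCC x).mpr h1, zm_ne.mp h3, zm_ne.mp h4⟩, h2⟩
  -- conclusion
  intro w hw
  simp only [Set.mem_insert_iff, Set.mem_singleton_iff] at hw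
  rcases hw with rfl | rfl
  · refine ⟨N w p0 q0, ?_, ?_⟩
    · intro p q hpq
      rw [hconv w p q, ← hN w p q]
      exact hNdconst p q p0 q0 hpq hp0q0
    · have hh := hfinal w (N w p0 q0) (fun p q hpq => by
        rw [← hN w p q]; exact hNdconst p q p0 q0 hpq hp0q0)
      rw [← hA w] at hh
      rw [hh, ← hAd1, Nat.add_sub_cancel]
  · refine ⟨N m p0 q0, ?_, ?_⟩
    · intro p q hpq
      rw [hconv m p q, ← hN m p q]
      exact hNmconst p q p0 q0 hpq hp0q0
    · have hh := hfinal m (N m p0 q0) (fun p q hpq => by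
        rw [← hN m p q]; exact hNmconst p q p0 q0 hpq hp0q0)
      rw [← hA m] at hh
      rw [hh, ← hAm1, Nat.add_sub_cancel]
end

section
/- For every odd integer m ≥ 5 there exists a binary projective three-weight linear code C_1 of length n = 2^{m−2} − 2^{(m−3)/2}, dimension m and minimum distance 2^{m−3} − 2^{(m−3)/2} with A_n(C_1) = 1. -/
open Finset

section CharSum

variable {s : ℕ}

/-- ambient space `F_2^{2s}` structured as pairs -/
abbrev Vs (s : ℕ) := Fin s → (ZMod 2 × ZMod 2)

def Qf (x : Vs s) : ZMod 2 := ∑ j, (x j).1 * (x j).2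

def Lf (u x : Vs s) : ZMod 2 := ∑ j, ((u j).1 * (x j).1 + (u j).2 * (x j).2)

def chi (a : ZMod 2) : ℤ := if a = 0 then 1 else -1

lemma chi_add (a b : ZMod 2) : chi (a + b) = chi a * chi b := by revert a b; decide

lemma chi_sum {α : Type*} (t : Finset α) (f : α → ZMod 2) :
    chi (∑ j ∈ t, f j) = ∏ j ∈ t, chi (f j) := by
  classical
  induction t using Finset.induction with
  | empty => simp [chi]
  | insert _ _ h ih => rw [Finset.sum_insert h, Finset.prod_insert h, chi_add, ih]

lemma Lf_zero (x : Vs s) : Lf 0 x = 0 := by simp [Lf]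

lemma Lf_add_left (u v x : Vs s) : Lf (u + v) x = Lf u x + Lf v x := by
  simp [Lf, ← Finset.sum_add_distrib]; apply Finset.sum_congr rfl; intros; ring

lemma Lf_smul_left (a : ZMod 2) (u x : Vs s) : Lf (a • u) x = a * Lf u x := by
  simp [Lf, Finset.mul_sum]; apply Finset.sum_congr rfl; intros; ring

lemma Lf_add_right (u x y : Vs s) : Lf u (x + y) = Lf u x + Lf u y := by
  simp [Lf, ← Finset.sum_add_distrib]; apply Finset.sum_congr rfl; intros; ring

lemma sum_chi_QL (u : Vs s) :
    ∑ x : Vs s, chi (Qf x + Lf u x) = 2 ^ s * chi (Qf u) := by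
  have key : ∀ x : Vs s, chi (Qf x + Lf u x)
      = ∏ j, chi ((x j).1 * (x j).2 + ((u j).1 * (x j).1 + (u j).2 * (x j).2)) := by
    intro x
    rw [Qf, Lf, ← Finset.sum_add_distrib, chi_sum]
  simp only [key]
  rw [← Fintype.prod_sum (fun j (a : ZMod 2 × ZMod 2) =>
      chi (a.1 * a.2 + ((u j).1 * a.1 + (u j).2 * a.2)))]
  have single : ∀ p : ZMod 2 × ZMod 2,
      ∑ a : ZMod 2 × ZMod 2, chi (a.1 * a.2 + (p.1 * a.1 + p.2 * a.2)) = 2 * chi (p.1 * p.2) := by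
    decide
  simp only [single]
  rw [Finset.prod_mul_distrib, Finset.prod_const, ← chi_sum, Qf]
  simp

lemma sum_chi_Q : ∑ x : Vs s, chi (Qf x) = 2 ^ s := by
  have := sum_chi_QL (s := s) 0
  simp only [Lf_zero, add_zero] at this
  rw [this]
  simp [Qf, chi]

lemma sum_chi_L {u : Vs s} (hu : u ≠ 0) : ∑ x : Vs s, chi (Lf u x) = 0 := by
  have key : ∀ x : Vs s, chi (Lf u x)
      = ∏ j, chi ((u j).1 * (x j).1 + (u j).2 * (x j).2) := fun x => chi_sum _ _
  simp only [key]
  rw [← Fintype.prod_sum (fun j (a : ZMod 2 × ZMod 2) => chi ((u j).1 * a.1 + (u j).2 * a.2))]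
  obtain ⟨j0, hj0⟩ : ∃ j, u j ≠ 0 := by
    by_contra h; push_neg at h; exact hu (funext fun j => h j)
  apply Finset.prod_eq_zero (Finset.mem_univ j0)
  have : ∀ p : ZMod 2 × ZMod 2, p ≠ 0 →
      ∑ a : ZMod 2 × ZMod 2, chi (p.1 * a.1 + p.2 * a.2) = 0 := by decide
  exact this _ hj0

end CharSum

section Counting

variable {s : ℕ}

@[simp] lemma chi_zero : chi (0 : ZMod 2) = 1 := rfl
@[simp] lemma chi_one : chi (1 : ZMod 2) = -1 := by decide

def nCount (s : ℕ) (u : Vs s) (ε c : ZMod 2) : ℕ :=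
  (Finset.univ.filter (fun x : Vs s => Qf x = ε ∧ Lf u x = c)).card

lemma card_Vs : Fintype.card (Vs s) = 4 ^ s := by
  simp [Fintype.card_fun]

lemma four_mul_nCount (u : Vs s) (ε c : ZMod 2) :
    (4 : ℤ) * nCount s u ε c
      = 4 ^ s + chi ε * 2 ^ s + chi c * (∑ x : Vs s, chi (Lf u x))
        + chi ε * chi c * (2 ^ s * chi (Qf u)) := by
  have hpt : ∀ a b e f : ZMod 2,
      (1 + chi (a + e)) * (1 + chi (b + f)) = if a = e ∧ b = f then 4 else 0 := by decide
  have hpt2 : ∀ a b e f : ZMod 2,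
      (1 + chi (a + e)) * (1 + chi (b + f))
        = 1 + chi e * chi a + chi f * chi b + chi e * chi f * chi (a + b) := by decide
  have key : ∑ x : Vs s, (1 + chi (Qf x + ε)) * (1 + chi (Lf u x + c))
      = (4 : ℤ) * nCount s u ε c := by
    simp only [hpt]
    rw [Finset.sum_ite, Finset.sum_const, Finset.sum_const, smul_zero, add_zero,
      nsmul_eq_mul, nCount, mul_comm]
  rw [← key]
  simp only [hpt2]
  rw [Finset.sum_add_distrib, Finset.sum_add_distrib, Finset.sum_add_distrib,
    Finset.sum_const, ← Finset.mul_sum, ← Finset.mul_sum, ← Finset.mul_sum,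
    sum_chi_Q, sum_chi_QL, Finset.card_univ, card_Vs]
  push_cast
  ring

lemma chi_mul_chi (a b : ZMod 2) : chi a * chi b = if a = b then 1 else -1 := by
  revert a b; decide

lemma nCount_ne_zero_left (hs : 2 ≤ s) {u : Vs s} (hu : u ≠ 0) (c : ZMod 2) :
    nCount s u 1 c = if c = Qf u then 2 ^ (2 * s - 2) - 2 ^ (s - 1) else 2 ^ (2 * s - 2) := by
  obtain ⟨S, rfl⟩ : ∃ S, s = S + 2 := ⟨s - 2, by omega⟩
  have e1 : 2 * (S + 2) - 2 = 2 * S + 2 := by omega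
  have e2 : S + 2 - 1 = S + 1 := by omega
  have hpow1 : (4 : ℤ) ^ (S + 2) = 16 * (2 ^ S) ^ 2 := by
    rw [show (4:ℤ) = 2^2 by norm_num, ← pow_mul, show 2*(S+2) = S*2+4 by ring, pow_add, pow_mul]
    ring
  have hpow2 : (2 : ℤ) ^ (S + 2) = 4 * 2 ^ S := by rw [pow_add]; ring
  have hpow3 : (2 : ℤ) ^ (2 * S + 2) = 4 * (2 ^ S) ^ 2 := by
    rw [show 2*S+2 = S*2+2 by ring, pow_add, pow_mul]; ring
  have hpow4 : (2 : ℤ) ^ (S + 1) = 2 * 2 ^ S := by rw [pow_add]; ring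
  have h4 : (4 : ℤ) ≠ 0 := by norm_num
  have hz := four_mul_nCount u 1 c
  rw [sum_chi_L hu, mul_zero, add_zero, chi_one] at hz
  have hz' : (4 : ℤ) * nCount (S + 2) u 1 c
      = 4 ^ (S + 2) - 2 ^ (S + 2) - 2 ^ (S + 2) * (chi c * chi (Qf u)) := by
    linear_combination hz
  rw [chi_mul_chi] at hz'
  by_cases hc : c = Qf u
  · rw [if_pos hc] at hz'
    rw [if_pos hc, e1, e2]
    have hle : 2 ^ (S + 1) ≤ 2 ^ (2 * S + 2) := Nat.pow_le_pow_right (by norm_num) (by omega)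
    have hn : ((nCount (S + 2) u 1 c : ℤ)) = ((2 ^ (2 * S + 2) - 2 ^ (S + 1) : ℕ) : ℤ) := by
      rw [Nat.cast_sub hle]
      apply mul_left_cancel₀ h4
      rw [hz']
      push_cast
      rw [hpow1, hpow2, hpow3, hpow4]
      ring
    exact_mod_cast hn
  · rw [if_neg hc] at hz'
    rw [if_neg hc, e1]
    have hn : ((nCount (S + 2) u 1 c : ℤ)) = ((2 ^ (2 * S + 2) : ℕ) : ℤ) := by
      apply mul_left_cancel₀ h4
      rw [hz']
      push_cast
      rw [hpow1, hpow2, hpow3]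
      ring
    exact_mod_cast hn

lemma nCount_zero_left (hs : 2 ≤ s) (c : ZMod 2) :
    nCount s 0 1 c = if c = 0 then 2 ^ (2 * s - 1) - 2 ^ (s - 1) else 0 := by
  obtain ⟨S, rfl⟩ : ∃ S, s = S + 2 := ⟨s - 2, by omega⟩
  have e1 : 2 * (S + 2) - 1 = 2 * S + 3 := by omega
  have e2 : S + 2 - 1 = S + 1 := by omega
  have hpow1 : (4 : ℤ) ^ (S + 2) = 16 * (2 ^ S) ^ 2 := by
    rw [show (4:ℤ) = 2^2 by norm_num, ← pow_mul, show 2*(S+2) = S*2+4 by ring, pow_add, pow_mul]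
    ring
  have hpow2 : (2 : ℤ) ^ (S + 2) = 4 * 2 ^ S := by rw [pow_add]; ring
  have hpow3 : (2 : ℤ) ^ (2 * S + 3) = 8 * (2 ^ S) ^ 2 := by
    rw [show 2*S+3 = S*2+3 by ring, pow_add, pow_mul]; ring
  have hpow4 : (2 : ℤ) ^ (S + 1) = 2 * 2 ^ S := by rw [pow_add]; ring
  have h4 : (4 : ℤ) ≠ 0 := by norm_num
  have hQ0 : Qf (0 : Vs (S + 2)) = 0 := by simp [Qf]
  have hL0 : ∑ x : Vs (S + 2), chi (Lf 0 x) = 4 ^ (S + 2) := by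
    simp only [Lf_zero, chi_zero]
    rw [Finset.sum_const, Finset.card_univ, card_Vs]
    push_cast; ring
  have hz := four_mul_nCount (0 : Vs (S + 2)) 1 c
  rw [hL0, hQ0, chi_zero, chi_one, mul_one] at hz
  by_cases hc : c = 0
  · subst hc
    rw [chi_zero] at hz
    rw [if_pos rfl, e1, e2]
    have hle : 2 ^ (S + 1) ≤ 2 ^ (2 * S + 3) := Nat.pow_le_pow_right (by norm_num) (by omega)
    have hn : ((nCount (S + 2) (0 : Vs (S+2)) 1 0 : ℤ)) = ((2 ^ (2 * S + 3) - 2 ^ (S + 1) : ℕ) : ℤ) := by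
      rw [Nat.cast_sub hle]
      apply mul_left_cancel₀ h4
      rw [hz]
      push_cast
      rw [hpow1, hpow2, hpow3, hpow4]
      ring
    exact_mod_cast hn
  · have hall : ∀ a : ZMod 2, a ≠ 0 → a = 1 := by decide
    have hc1 := hall c hc
    subst hc1
    rw [chi_one] at hz
    rw [if_neg (by decide)]
    have hn : ((nCount (S + 2) (0 : Vs (S+2)) 1 1 : ℤ)) = ((0 : ℕ) : ℤ) := by
      apply mul_left_cancel₀ h4
      rw [hz]
      push_cast
      ring
    exact_mod_cast hn

end Counting

section Code

abbrev nLen (s : ℕ) : ℕ := 2 ^ (2 * s - 1) - 2 ^ (s - 1)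

abbrev Dset (s : ℕ) := {x : Vs s // Qf x = 1}

lemma card_Dset (s : ℕ) (hs : 2 ≤ s) : Fintype.card (Dset s) = nLen s := by
  have h := nCount_zero_left (s := s) hs 0
  rw [if_pos rfl] at h
  show Fintype.card (Dset s) = 2 ^ (2 * s - 1) - 2 ^ (s - 1)
  rw [← h, nCount, Fintype.card_subtype]
  congr 1
  apply Finset.filter_congr
  intro x _
  simp [Lf_zero]

def phi (s : ℕ) (e : Fin (nLen s) ≃ Dset s) : (Vs s × ZMod 2) →ₗ[ZMod 2] (Fin (nLen s) → ZMod 2) where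
  toFun p := fun i => Lf p.1 (e i).1 + p.2
  map_add' p q := by
    funext i
    simp only [Lf_add_left, Prod.fst_add, Prod.snd_add, Pi.add_apply]
    ring
  map_smul' a p := by
    funext i
    simp only [Prod.smul_fst, Prod.smul_snd, Pi.smul_apply, smul_eq_mul, RingHom.id_apply,
      Lf_smul_left]
    ring

lemma phi_apply (s : ℕ) (e : Fin (nLen s) ≃ Dset s) (u : Vs s) (ε : ZMod 2) (i : Fin (nLen s)) :
    phi s e (u, ε) i = Lf u (e i).1 + ε := rfl

lemma wt_phi (s : ℕ) (e : Fin (nLen s) ≃ Dset s) (u : Vs s) (ε : ZMod 2) :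
    wt (phi s e (u, ε)) = nCount s u 1 (1 + ε) := by
  have hiff : ∀ a b : ZMod 2, (a + b ≠ 0) ↔ (a = 1 + b) := by decide
  rw [wt]
  have e1 : {i : Fin (nLen s) // phi s e (u, ε) i ≠ 0} ≃
      {x : Vs s // Qf x = 1 ∧ Lf u x = 1 + ε} := by
    refine Equiv.trans (Equiv.subtypeEquivRight
        (q := fun i => Lf u ((e i).1) = 1 + ε) (fun i => ?_))
      ((Equiv.subtypeEquivOfSubtype (p := fun x : Dset s => Lf u x.1 = 1 + ε) e).trans
        (Equiv.subtypeSubtypeEquivSubtypeInter (fun y : Vs s => Qf y = 1)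
          (fun y : Vs s => Lf u y = 1 + ε)))
    rw [phi_apply]
    exact hiff _ _
  rw [Nat.card_congr e1, Nat.card_eq_fintype_card, Fintype.card_subtype, nCount]

lemma wt_zero {ι : Type*} : wt (0 : ι → ZMod 2) = 0 := by
  have : IsEmpty {i : ι // (0 : ι → ZMod 2) i ≠ 0} := ⟨fun x => x.2 rfl⟩
  rw [wt]
  exact Nat.card_of_isEmpty

lemma Lf_single (s : ℕ) (j : Fin s) (a : ZMod 2 × ZMod 2) (x : Vs s) :
    Lf (Pi.single j a) x = a.1 * (x j).1 + a.2 * (x j).2 := by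
  rw [Lf, Finset.sum_eq_single_of_mem j (Finset.mem_univ j)]
  · rw [Pi.single_eq_same]
  · intro b _ hb
    rw [Pi.single_eq_of_ne hb]
    simp

lemma nondeg (s : ℕ) {v : Vs s} (hv : v ≠ 0) : ∃ u : Vs s, Lf u v = 1 := by
  obtain ⟨j, hj⟩ : ∃ j, v j ≠ 0 := by
    by_contra h; push_neg at h; exact hv (funext fun j => h j)
  have hcase : ∀ a : ZMod 2 × ZMod 2, a ≠ 0 → a.1 = 1 ∨ a.2 = 1 := by decide
  rcases hcase _ hj with h1 | h2
  · exact ⟨Pi.single j (1, 0), by rw [Lf_single]; simp [h1]⟩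
  · exact ⟨Pi.single j (0, 1), by rw [Lf_single]; simp [h2]⟩

lemma phi_inj (s : ℕ) (hs : 2 ≤ s) (e : Fin (nLen s) ≃ Dset s) :
    Function.Injective (phi s e) := by
  have hsub : ∀ a b : ZMod 2, a + b = 0 → a = b := by decide
  refine (injective_iff_map_eq_zero _).mpr ?_
  rintro ⟨u, ε⟩ h
  have hLe : ∀ i : Fin (nLen s), Lf u (e i).1 = ε := by
    intro i
    exact hsub _ _ (congrFun h i)
  have hA1 : (1:ℕ) ≤ 2 ^ (s - 1) := Nat.one_le_two_pow
  have hAB : (2:ℕ) ^ (s - 1) < 2 ^ (2 * s - 2) := Nat.pow_lt_pow_right one_lt_two (by omega)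
  have h2B : (2:ℕ) ^ (2 * s - 1) = 2 * 2 ^ (2 * s - 2) := by
    rw [show 2 * s - 1 = (2 * s - 2) + 1 by omega, pow_succ]; ring
  by_cases hu : u = 0
  · subst hu
    have hn0 : 0 < nLen s := by
      unfold nLen
      rw [h2B]
      omega
    have h0 := hLe ⟨0, hn0⟩
    rw [Lf_zero] at h0
    exact Prod.ext rfl h0.symm
  · exfalso
    have hall : ∀ x : Dset s, Lf u x.1 = ε := by
      intro x
      have := hLe (e.symm x)
      rwa [Equiv.apply_symm_apply] at this
    have hcount : nCount s u 1 ε = nLen s := by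
      rw [← card_Dset s hs, nCount, Fintype.card_subtype]
      congr 1
      apply Finset.filter_congr
      intro x _
      exact ⟨fun h' => h'.1, fun h' => ⟨h', hall ⟨x, h'⟩⟩⟩
    have hle : nCount s u 1 ε ≤ 2 ^ (2 * s - 2) := by
      rw [nCount_ne_zero_left hs hu]
      split
      · exact Nat.sub_le _ _
      · exact le_rfl
    rw [hcount] at hle
    unfold nLen at hle
    rw [h2B] at hle
    omega

lemma main (s : ℕ) (hs : 2 ≤ s) :
    ∃ C : Submodule (ZMod 2) (Fin (2 ^ (2 * s - 1) - 2 ^ (s - 1)) → ZMod 2),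
      Module.finrank (ZMod 2) C = 2 * s + 1 ∧
      IsMinDist (C : Set (Fin (2 ^ (2 * s - 1) - 2 ^ (s - 1)) → ZMod 2))
        (2 ^ (2 * s - 2) - 2 ^ (s - 1)) ∧
      IsProjective (C : Set (Fin (2 ^ (2 * s - 1) - 2 ^ (s - 1)) → ZMod 2)) ∧
      numNonzeroWeights (C : Set (Fin (2 ^ (2 * s - 1) - 2 ^ (s - 1)) → ZMod 2)) = 3 ∧
      weightCount (C : Set (Fin (2 ^ (2 * s - 1) - 2 ^ (s - 1)) → ZMod 2))
        (2 ^ (2 * s - 1) - 2 ^ (s - 1)) = 1 := by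
  classical
  -- numeric facts
  have hA1 : (1:ℕ) ≤ 2 ^ (s - 1) := Nat.one_le_two_pow
  have hAB : (2:ℕ) ^ (s - 1) < 2 ^ (2 * s - 2) := Nat.pow_lt_pow_right one_lt_two (by omega)
  have h2B : (2:ℕ) ^ (2 * s - 1) = 2 * 2 ^ (2 * s - 2) := by
    rw [show 2 * s - 1 = (2 * s - 2) + 1 by omega, pow_succ]; ring
  have harith : ∀ A B : ℕ, 1 ≤ A → A < B →
      (1 ≤ B - A ∧ B - A < B ∧ B < 2 * B - A ∧ 1 ≤ 2 * B - A ∧ B - A < 2 * B - A) := by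
    intro A B h1 h2; omega
  obtain ⟨hd1, hdw2, hw2w3, hw31, hdw3⟩ :=
    harith (2 ^ (s - 1)) (2 ^ (2 * s - 2)) hA1 hAB
  rw [← h2B] at hw2w3 hw31 hdw3
  -- the code
  have e : Fin (nLen s) ≃ Dset s := (Fintype.equivFinOfCardEq (card_Dset s hs)).symm
  set Csub := LinearMap.range (phi s e) with hCsub
  -- helpers on ZMod 2
  have hZ : ∀ a : ZMod 2, a = 0 ∨ a = 1 := by decide
  have hq1 : ∀ q : ZMod 2, 1 + (1 + q) = q := by decide
  have hone : ((1:ZMod 2) + 1) = 0 := by decide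
  have hmem : ∀ c, c ∈ (Csub : Set (Fin (nLen s) → ZMod 2)) ↔
      ∃ u ε, phi s e (u, ε) = c := by
    intro c
    constructor
    · rintro ⟨⟨u, ε⟩, h⟩; exact ⟨u, ε, h⟩
    · rintro ⟨u, ε, h⟩; exact ⟨(u, ε), h⟩
  have hwt : ∀ u ε, wt (phi s e (u, ε)) = nCount s u 1 (1 + ε) := wt_phi s e
  have hphi00 : phi s e (0, 0) = 0 := by
    have h0 : ((0, 0) : Vs s × ZMod 2) = 0 := rfl
    rw [h0, map_zero]
  have hwtmax : wt (phi s e (0, 1)) = 2 ^ (2 * s - 1) - 2 ^ (s - 1) := by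
    rw [hwt, hone, nCount_zero_left hs, if_pos rfl]
  -- classification of weights
  have hclass : ∀ c, c ∈ (Csub : Set (Fin (nLen s) → ZMod 2)) →
      c = 0 ∨ wt c = 2 ^ (2 * s - 2) - 2 ^ (s - 1) ∨ wt c = 2 ^ (2 * s - 2) ∨
        wt c = 2 ^ (2 * s - 1) - 2 ^ (s - 1) := by
    intro c hc
    obtain ⟨u, ε, rfl⟩ := (hmem c).mp hc
    by_cases hu : u = 0
    · subst hu
      rcases hZ ε with rfl | rfl
      · exact Or.inl hphi00
      · exact Or.inr (Or.inr (Or.inr hwtmax))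
    · right
      rw [hwt, nCount_ne_zero_left hs hu]
      split
      · exact Or.inl rfl
      · exact Or.inr (Or.inl rfl)
  -- special codewords
  have i0 : Fin s := ⟨0, by omega⟩
  have hu0 : (Pi.single i0 ((1, 0) : ZMod 2 × ZMod 2) : Vs s) ≠ 0 := by
    intro h
    have h1 := congrFun h i0
    rw [Pi.single_eq_same] at h1
    exact (by decide : ((1, 0) : ZMod 2 × ZMod 2) ≠ 0) h1
  set u0 : Vs s := Pi.single i0 ((1, 0) : ZMod 2 × ZMod 2) with hu0def
  have hwtmin : wt (phi s e (u0, 1 + Qf u0)) = 2 ^ (2 * s - 2) - 2 ^ (s - 1) := by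
    rw [hwt, hq1, nCount_ne_zero_left hs hu0, if_pos rfl]
  have hq2 : ∀ q : ZMod 2, 1 + q ≠ q := by decide
  have hwtmid : wt (phi s e (u0, Qf u0)) = 2 ^ (2 * s - 2) := by
    rw [hwt, nCount_ne_zero_left hs hu0, if_neg (hq2 (Qf u0))]
  have hwt0 : wt (0 : Fin (nLen s) → ZMod 2) = 0 := wt_zero
  have hmem1 : ∀ u ε, phi s e (u, ε) ∈ (Csub : Set (Fin (nLen s) → ZMod 2)) :=
    fun u ε => ⟨(u, ε), rfl⟩
  -- goal 1 : finrank
  have hrank : Module.finrank (ZMod 2) Csub = 2 * s + 1 := by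
    rw [hCsub, LinearMap.finrank_range_of_inj (phi_inj s hs e)]
    rw [Module.finrank_prod, Module.finrank_pi_fintype, Module.finrank_self]
    simp only [Module.finrank_prod, Module.finrank_self]
    rw [Finset.sum_const, Finset.card_univ, Fintype.card_fin, smul_eq_mul]
    omega
  -- goal 2 : min dist
  have hmind : IsMinDist (Csub : Set (Fin (nLen s) → ZMod 2))
      (2 ^ (2 * s - 2) - 2 ^ (s - 1)) := by
    constructor
    · refine ⟨phi s e (u0, 1 + Qf u0), hmem1 _ _, ?_, hwtmin⟩
      intro h0
      rw [h0, hwt0] at hwtmin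
      exact absurd hwtmin.symm (by omega)
    · intro c hc hc0
      rcases hclass c hc with rfl | h | h | h
      · exact absurd rfl hc0
      · exact le_of_eq h.symm
      · rw [h]; exact le_of_lt hdw2
      · rw [h]; exact le_of_lt hdw3
  -- goal 3 : projective
  have hproj : IsProjective (Csub : Set (Fin (nLen s) → ZMod 2)) := by
    intro x hx hx0
    by_contra hlt
    push_neg at hlt
    set T := Finset.univ.filter (fun i => x i ≠ 0) with hT
    have hwtx : wt x = T.card := by
      rw [wt, Nat.card_eq_fintype_card, Fintype.card_subtype]
    have hones : ∀ a : ZMod 2, a ≠ 0 → a = 1 := by decide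
    have hsum : ∀ c : Fin (nLen s) → ZMod 2, (∑ᶠ i, x i * c i) = ∑ i ∈ T, c i := by
      intro c
      have h1 : ∑ i ∈ T, x i * c i = ∑ i, x i * c i := by
        apply Finset.sum_subset (Finset.filter_subset _ _)
        intro i _ hiT
        have hxi : x i = 0 := by
          by_contra hne
          exact hiT (Finset.mem_filter.mpr ⟨Finset.mem_univ i, hne⟩)
        rw [hxi, zero_mul]
      have h2 : ∑ i ∈ T, x i * c i = ∑ i ∈ T, c i := by
        apply Finset.sum_congr rfl
        intro i hi
        rw [hones (x i) (Finset.mem_filter.mp hi).2, one_mul]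
      rw [finsum_eq_sum_of_fintype, ← h1, h2]
    have hTne : T.Nonempty := by
      obtain ⟨i, hi⟩ : ∃ i, x i ≠ 0 := by
        by_contra hh
        push_neg at hh
        exact hx0 (funext fun i => hh i)
      exact ⟨i, Finset.mem_filter.mpr ⟨Finset.mem_univ i, hi⟩⟩
    have hcard2 : T.card = 2 := by
      have h1 := hx (phi s e (0, 1)) (hmem1 0 1)
      rw [hsum] at h1
      have h2 : ∑ i ∈ T, phi s e (0, 1) i = ((T.card : ℕ) : ZMod 2) := by
        have h3 : ∀ i, phi s e ((0 : Vs s), (1 : ZMod 2)) i = 1 := fun i => by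
          rw [phi_apply, Lf_zero, zero_add]
        rw [Finset.sum_congr rfl (fun i _ => h3 i), Finset.sum_const, nsmul_eq_mul, mul_one]
      rw [h2] at h1
      have hdvd : 2 ∣ T.card := (ZMod.natCast_eq_zero_iff _ 2).mp h1
      have hpos : 0 < T.card := Finset.card_pos.mpr hTne
      rw [hwtx] at hlt
      omega
    obtain ⟨p, q, hpq, hTeq⟩ := Finset.card_eq_two.mp hcard2
    have hv : ((e p).1 + (e q).1 : Vs s) ≠ 0 := by
      intro h0
      have hchar : ∀ a b : ZMod 2 × ZMod 2, a + b = 0 → a = b := by decide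
      have heq : ((e p).1 : Vs s) = (e q).1 := funext fun j => hchar _ _ (congrFun h0 j)
      exact hpq (e.injective (Subtype.ext heq))
    obtain ⟨u, hu⟩ := nondeg s hv
    have h2 := hx (phi s e (u, 0)) (hmem1 u 0)
    rw [hsum, hTeq, Finset.sum_pair hpq, phi_apply, phi_apply, add_zero, add_zero,
      ← Lf_add_right, hu] at h2
    exact one_ne_zero h2
  -- weightCount nonvanishing helper
  have hwcne : ∀ w (c : Fin (nLen s) → ZMod 2),
      c ∈ (Csub : Set (Fin (nLen s) → ZMod 2)) → wt c = w →
      weightCount (Csub : Set (Fin (nLen s) → ZMod 2)) w ≠ 0 := by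
    intro w c hc hw
    have : Nonempty {c' : Fin (nLen s) → ZMod 2 //
        c' ∈ (Csub : Set (Fin (nLen s) → ZMod 2)) ∧ wt c' = w} := ⟨⟨c, hc, hw⟩⟩
    have hpos : 0 < weightCount (Csub : Set (Fin (nLen s) → ZMod 2)) w := Nat.card_pos
    omega
  -- goal 4 : three weights
  have hnum : numNonzeroWeights (Csub : Set (Fin (nLen s) → ZMod 2)) = 3 := by
    have hset : {i : ℕ | 1 ≤ i ∧ weightCount (Csub : Set (Fin (nLen s) → ZMod 2)) i ≠ 0}
        = {2 ^ (2 * s - 2) - 2 ^ (s - 1), 2 ^ (2 * s - 2), 2 ^ (2 * s - 1) - 2 ^ (s - 1)} := by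
      ext w
      simp only [Set.mem_setOf_eq, Set.mem_insert_iff, Set.mem_singleton_iff]
      constructor
      · rintro ⟨h1, h2⟩
        have hne : Nonempty {c : Fin (nLen s) → ZMod 2 //
            c ∈ (Csub : Set (Fin (nLen s) → ZMod 2)) ∧ wt c = w} := by
          by_contra hempty
          rw [not_nonempty_iff] at hempty
          exact h2 Nat.card_of_isEmpty
        obtain ⟨c, hc, hcw⟩ := hne.some
        rcases hclass c hc with rfl | h | h | h
        · rw [hwt0] at hcw; omega
        · exact Or.inl (hcw.symm.trans h)
        · exact Or.inr (Or.inl (hcw.symm.trans h))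
        · exact Or.inr (Or.inr (hcw.symm.trans h))
      · rintro (rfl | rfl | rfl)
        · exact ⟨hd1, hwcne _ _ (hmem1 u0 (1 + Qf u0)) hwtmin⟩
        · exact ⟨Nat.one_le_two_pow, hwcne _ _ (hmem1 u0 (Qf u0)) hwtmid⟩
        · exact ⟨hw31, hwcne _ _ (hmem1 0 1) hwtmax⟩
    rw [numNonzeroWeights, hset, Nat.card_coe_set_eq]
    have hne1 : (2:ℕ) ^ (2 * s - 2) - 2 ^ (s - 1) ∉
        ({2 ^ (2 * s - 2), 2 ^ (2 * s - 1) - 2 ^ (s - 1)} : Set ℕ) := by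
      simp only [Set.mem_insert_iff, Set.mem_singleton_iff]
      push_neg
      exact ⟨Nat.ne_of_lt hdw2, Nat.ne_of_lt hdw3⟩
    have hne2 : (2:ℕ) ^ (2 * s - 2) ∉ ({2 ^ (2 * s - 1) - 2 ^ (s - 1)} : Set ℕ) := by
      simp only [Set.mem_singleton_iff]
      exact Nat.ne_of_lt hw2w3
    rw [Set.ncard_insert_of_notMem hne1, Set.ncard_insert_of_notMem hne2,
      Set.ncard_singleton]
  -- goal 5 : A_n = 1
  have hsing : ∀ c, c ∈ (Csub : Set (Fin (nLen s) → ZMod 2)) →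
      wt c = 2 ^ (2 * s - 1) - 2 ^ (s - 1) → c = phi s e (0, 1) := by
    intro c hc hw
    obtain ⟨u, ε, rfl⟩ := (hmem c).mp hc
    by_cases hu : u = 0
    · subst hu
      rcases hZ ε with rfl | rfl
      · rw [hphi00, hwt0] at hw
        omega
      · rfl
    · exfalso
      rw [hwt, nCount_ne_zero_left hs hu] at hw
      split at hw
      · exact absurd hw (Nat.ne_of_lt hdw3)
      · exact absurd hw (Nat.ne_of_lt hw2w3)
  have hwc1 : weightCount (Csub : Set (Fin (nLen s) → ZMod 2))
      (2 ^ (2 * s - 1) - 2 ^ (s - 1)) = 1 := by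
    rw [weightCount, Nat.card_eq_one_iff_unique]
    constructor
    · constructor
      rintro ⟨c1, hc1, hw1⟩ ⟨c2, hc2, hw2⟩
      exact Subtype.ext ((hsing c1 hc1 hw1).trans (hsing c2 hc2 hw2).symm)
    · exact ⟨⟨phi s e (0, 1), hmem1 0 1, hwtmax⟩⟩
  exact ⟨Csub, hrank, hmind, hproj, hnum, hwc1⟩

theorem exists_three_weight_code_minus (m : ℕ) (hm : 5 ≤ m) (hmodd : Odd m) :
    ∃ C : Submodule (ZMod 2) (Fin (2 ^ (m - 2) - 2 ^ ((m - 3) / 2)) → ZMod 2),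
      Module.finrank (ZMod 2) C = m ∧
      IsMinDist (C : Set (Fin (2 ^ (m - 2) - 2 ^ ((m - 3) / 2)) → ZMod 2))
        (2 ^ (m - 3) - 2 ^ ((m - 3) / 2)) ∧
      IsProjective (C : Set (Fin (2 ^ (m - 2) - 2 ^ ((m - 3) / 2)) → ZMod 2)) ∧
      numNonzeroWeights (C : Set (Fin (2 ^ (m - 2) - 2 ^ ((m - 3) / 2)) → ZMod 2)) = 3 ∧
      weightCount (C : Set (Fin (2 ^ (m - 2) - 2 ^ ((m - 3) / 2)) → ZMod 2))
        (2 ^ (m - 2) - 2 ^ ((m - 3) / 2)) = 1 := by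
  obtain ⟨k, rfl⟩ := hmodd
  have h1 : 2 * k + 1 - 2 = 2 * k - 1 := by omega
  have h2 : (2 * k + 1 - 3) / 2 = k - 1 := by omega
  have h3 : 2 * k + 1 - 3 = 2 * k - 2 := by omega
  rw [h1, h2, h3]
  exact main k (by omega)
end Code
end
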